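/- arXiv:1006.3786 — 4 statements merged into one kernel-verified Lean document; each statement's English description precedes it below -/
import Mathlib

section
/- For k-XOR-SAT with k even, the mapping Γ_l : M₁({−1,1}^l) → ℝ is convex for every l ≥ 1. Explicitly, Γ_l(ν) = Σ_{Q ⊆ [l], |Q| even} f_ν(Q)^k, where f_ν(Q) := E[Π_{r∈Q} Z^{(r)}] for (Z^{(1)},…,Z^{(l)}) ~ ν is linear in ν, so the sum of k-th powers with k even is convex. -/
open Filter
open scoped Classical Topology BigOperators

noncomputable section

/-- A clause type on `k` Boolean variables: a Boolean function `{-1,+1}^k → {0,1}`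
(we encode `{-1,+1}` by `Bool`, `true ↔ +1`, and `{0,1}` by `Bool`). -/
abbrev CT (k : ℕ) : Type := (Fin k → Bool) → Bool

/-- `μ` is a probability distribution on the finite type `ι`. -/
def IsPMF {ι : Type*} [Fintype ι] (μ : ι → ℝ) : Prop :=
  (∀ i, 0 ≤ μ i) ∧ ∑ i, μ i = 1

/-- A clause of a general CSP formula: `k` variable indices together with a clause type. -/
abbrev ClauseG (n k : ℕ) : Type := (Fin k → Fin n) × CT k

/-- An assignment satisfies a clause iff the clause type evaluates to `1` on the
values of the chosen variables. -/
def satC {n k : ℕ} (x : Fin n → Bool) (c : ClauseG n k) : Prop :=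
  c.2 (fun j => x (c.1 j)) = true

/-- The number of assignments satisfying all the clauses `f 0, …, f (m-1)`. -/
def ZC {n k m : ℕ} (f : Fin m → ClauseG n k) : ℕ :=
  (Finset.univ.filter fun x : Fin n → Bool => ∀ a : Fin m, satC x (f a)).card

/-- The probability of drawing the clauses `f 0, …, f (m-1)` when each clause has its `k`
indices i.i.d. uniform in `Fin n` and its clause type drawn from `μ`, independently. -/
def wG {n k m : ℕ} (μ : CT k → ℝ) (f : Fin m → ClauseG n k) : ℝ :=
  ∏ a : Fin m, ((1 : ℝ) / (n : ℝ) ^ k) * μ (f a).2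

/-- `P_n(α, φ, μ) = ℙ{Z(F(α,n,μ)) < 2^{nφ}}` for the ensemble with `⌊αn⌋` clauses. -/
def PnG (k n : ℕ) (α φ : ℝ) (μ : CT k → ℝ) : ℝ :=
  ∑ f : Fin ⌊α * (n : ℝ)⌋₊ → ClauseG n k,
    if (ZC f : ℝ) < (2 : ℝ) ^ ((n : ℝ) * φ) then wG μ f else 0

/-- `α*(μ) = sup{α : P_n(α,0,μ) = O(1/(log n)^{1+ε}) for some ε > 0}`. -/
def alphaStarG (k : ℕ) (μ : CT k → ℝ) : ℝ :=
  sSup {α : ℝ | ∃ ε : ℝ, 0 < ε ∧ ∃ C : ℝ,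
    ∀ᶠ (n : ℕ) in atTop, PnG k n α 0 μ ≤ C / Real.log n ^ (1 + ε)}

/-- `v_θ(x) = ∏ᵢ (1 + xᵢ θ)/2`, the biased product measure on `{-1,1}^k`. -/
def vtheta {k : ℕ} (θ : ℝ) (x : Fin k → Bool) : ℝ :=
  ∏ i : Fin k, (1 + (if x i then (1 : ℝ) else -1) * θ) / 2

/-- `‖φ‖_θ² = ∑_x φ(x)² v_θ(x)`, the `v_θ`-probability that the clause type is satisfied. -/
def normSq {k : ℕ} (φ : CT k) (θ : ℝ) : ℝ :=
  ∑ x : Fin k → Bool, (if φ x then (1 : ℝ) else 0) * vtheta θ x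

/-- Hypothesis H1: (a) dominance of balanced assignments, i.e. for all `θ ∈ [-1,1]`,
`E_φ log ‖φ‖_θ ≤ E_φ log ‖φ‖` with equality only at `θ = 0`; and (b) unsatisfiability of
uniform assignments: for each `s ∈ {-1,+1}` some clause type in the support of `μ`
vanishes at `(s,…,s)`. -/
def H1 (k : ℕ) (μ : CT k → ℝ) : Prop :=
  (∀ θ ∈ Set.Icc (-1 : ℝ) 1,
    (∑ φ : CT k, μ φ * Real.log (Real.sqrt (normSq φ θ))) ≤
        (∑ φ : CT k, μ φ * Real.log (Real.sqrt (normSq φ 0))) ∧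
      ((∑ φ : CT k, μ φ * Real.log (Real.sqrt (normSq φ θ))) =
          (∑ φ : CT k, μ φ * Real.log (Real.sqrt (normSq φ 0))) → θ = 0)) ∧
  (∀ s : Bool, ∃ φ : CT k, 0 < μ φ ∧ φ (fun _ => s) = false)

/-- `Γ_l(ν) = E_φ E ∏_{r=1}^l (1 - φ(Z^{(r)}))`, where `Z_i = (Z_i^{(1)},…,Z_i^{(l)})`,
`i = 1,…,k`, are i.i.d. with distribution `ν` on `{-1,1}^l` and `φ ~ μ`. -/
def Gam (k : ℕ) (μ : CT k → ℝ) (l : ℕ) (ν : (Fin l → Bool) → ℝ) : ℝ :=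
  ∑ φ : CT k, μ φ *
    ∑ z : Fin k → Fin l → Bool,
      (∏ i : Fin k, ν (z i)) * ∏ r : Fin l, (if φ (fun i => z i r) then (0 : ℝ) else 1)

/-- Hypothesis H2: `Γ_l` is convex on the simplex of probability measures on `{-1,1}^l`,
for every `l ≥ 1`. -/
def H2 (k : ℕ) (μ : CT k → ℝ) : Prop :=
  ∀ l : ℕ, 1 ≤ l → ConvexOn ℝ (stdSimplex ℝ (Fin l → Bool)) (Gam k μ l)

/-- The parity of an assignment `x ∈ {-1,1}^k` (encoding `true ↔ -1`):
`parity x = true` iff `∏ᵢ xᵢ = -1`. -/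
def parity {k : ℕ} (x : Fin k → Bool) : Bool :=
  decide (Odd (Finset.univ.filter fun i : Fin k => x i = true).card)

/-- The XOR clause type `φ_s(x) = 1(∏ᵢ xᵢ = s)`, with `s ∈ {-1,1}` encoded by `Bool`
(`true ↔ -1`). -/
def xorClause (k : ℕ) (s : Bool) : CT k := fun x => parity x == s

/-- The `k`-XOR-SAT clause type distribution: `μ(φ₁) = μ(φ₋₁) = 1/2`. -/
def muXor (k : ℕ) : CT k → ℝ := fun φ =>
  (if φ = xorClause k true then (1 : ℝ) / 2 else 0) +
    (if φ = xorClause k false then (1 : ℝ) / 2 else 0)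

/-- Sign of a Boolean: `true ↦ -1`, `false ↦ 1`. -/
def xga_sgn : Bool → ℝ := fun b => if b then -1 else 1

lemma xga_prod_sgn {k : ℕ} (x : Fin k → Bool) :
    ∏ i, xga_sgn (x i) = (-1 : ℝ) ^ (Finset.univ.filter fun i : Fin k => x i = true).card := by
  rw [← Finset.prod_filter_mul_prod_filter_not Finset.univ (fun i => x i = true)]
  have h1 : ∏ i ∈ Finset.univ.filter (fun i : Fin k => x i = true), xga_sgn (x i)
      = (-1 : ℝ) ^ (Finset.univ.filter fun i : Fin k => x i = true).card := by
    rw [Finset.prod_congr rfl (fun i hi => ?_), Finset.prod_const]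
    simp only [Finset.mem_filter] at hi
    simp [xga_sgn, hi.2]
  have h2 : ∏ i ∈ Finset.univ.filter (fun i : Fin k => ¬ x i = true), xga_sgn (x i) = 1 := by
    apply Finset.prod_eq_one
    intro i hi
    simp only [Finset.mem_filter] at hi
    simp [xga_sgn, hi.2]
  rw [h1, h2, mul_one]

lemma xga_clause_eval {k : ℕ} (s : Bool) (x : Fin k → Bool) :
    (if xorClause k s x then (0 : ℝ) else 1)
      = (1 - xga_sgn s * ∏ i, xga_sgn (x i)) / 2 := by
  rw [xga_prod_sgn]
  by_cases h : Odd (Finset.univ.filter fun i : Fin k => x i = true).card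
  · rw [h.neg_one_pow]
    cases s <;> simp [xorClause, parity, h, xga_sgn] <;> norm_num
  · rw [(Nat.not_odd_iff_even.mp h).neg_one_pow]
    cases s <;> simp [xorClause, parity, h, xga_sgn] <;> norm_num

/-- The Fourier coefficient `f_ν(Q)`, linear in `ν`. -/
def xga_F {l : ℕ} (Q : Finset (Fin l)) (ν : (Fin l → Bool) → ℝ) : ℝ :=
  ∑ w : Fin l → Bool, ν w * ∏ r ∈ Q, xga_sgn (w r)

lemma xga_F_lin {l : ℕ} (Q : Finset (Fin l)) (a b : ℝ) (x y : (Fin l → Bool) → ℝ) :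
    xga_F Q (a • x + b • y) = a * xga_F Q x + b * xga_F Q y := by
  simp only [xga_F, Pi.add_apply, Pi.smul_apply, smul_eq_mul, add_mul,
    Finset.sum_add_distrib, Finset.mul_sum, mul_assoc]

/-- The half-sum `S(φ_s)(ν)` expanded in the Fourier basis. -/
lemma xga_S_eq (k : ℕ) (l : ℕ) (s : Bool) (ν : (Fin l → Bool) → ℝ) :
    (∑ z : Fin k → Fin l → Bool,
        (∏ i : Fin k, ν (z i)) *
          ∏ r : Fin l, (if xorClause k s (fun i => z i r) then (0 : ℝ) else 1))
      = ∑ Q : Finset (Fin l),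
          ((1 : ℝ) / 2) ^ l * (- xga_sgn s) ^ Q.card * (xga_F Q ν) ^ k := by
  have step1 : ∀ z : Fin k → Fin l → Bool,
      (∏ r : Fin l, (if xorClause k s (fun i => z i r) then (0 : ℝ) else 1))
        = ((1 : ℝ) / 2) ^ l *
            ∑ Q : Finset (Fin l), (- xga_sgn s) ^ Q.card *
              ∏ i : Fin k, ∏ r ∈ Q, xga_sgn (z i r) := by
    intro z
    have := fun r : Fin l => xga_clause_eval s (fun i => z i r)
    calc ∏ r : Fin l, (if xorClause k s (fun i => z i r) then (0 : ℝ) else 1)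
        = ∏ r : Fin l, ((- (xga_sgn s * ∏ i, xga_sgn (z i r)) + 1) / 2) := by
          refine Finset.prod_congr rfl fun r _ => ?_
          rw [this r]; ring
      _ = (∏ r : Fin l, (- (xga_sgn s * ∏ i, xga_sgn (z i r)) + 1)) / 2 ^ l := by
          rw [Finset.prod_div_distrib, Finset.prod_const]
          simp
      _ = ((1:ℝ)/2) ^ l * ∑ Q : Finset (Fin l), (- xga_sgn s) ^ Q.card *
              ∏ i : Fin k, ∏ r ∈ Q, xga_sgn (z i r) := by
          rw [Fintype.prod_add, one_div, inv_pow, div_eq_mul_inv, mul_comm]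
          congr 1
          refine Finset.sum_congr rfl fun Q _ => ?_
          rw [Finset.prod_const, one_pow, mul_one]
          have : ∏ r ∈ Q, -(xga_sgn s * ∏ i : Fin k, xga_sgn (z i r))
              = (- xga_sgn s) ^ Q.card * ∏ r ∈ Q, ∏ i : Fin k, xga_sgn (z i r) := by
            rw [← Finset.prod_const, ← Finset.prod_mul_distrib]
            refine Finset.prod_congr rfl fun r _ => by ring
          rw [this, Finset.prod_comm]
  calc (∑ z : Fin k → Fin l → Bool,
        (∏ i : Fin k, ν (z i)) *
          ∏ r : Fin l, (if xorClause k s (fun i => z i r) then (0 : ℝ) else 1))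
      = ∑ z : Fin k → Fin l → Bool, ∑ Q : Finset (Fin l),
          ((1:ℝ)/2) ^ l * (- xga_sgn s) ^ Q.card *
            ∏ i : Fin k, ν (z i) * ∏ r ∈ Q, xga_sgn (z i r) := by
        refine Finset.sum_congr rfl fun z _ => ?_
        rw [step1 z, Finset.mul_sum, Finset.mul_sum]
        refine Finset.sum_congr rfl fun Q _ => ?_
        rw [Finset.prod_mul_distrib]; ring
    _ = ∑ Q : Finset (Fin l), ((1:ℝ)/2) ^ l * (- xga_sgn s) ^ Q.card * (xga_F Q ν) ^ k := by
        rw [Finset.sum_comm]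
        refine Finset.sum_congr rfl fun Q _ => ?_
        rw [← Finset.mul_sum]
        congr 1
        rw [xga_F, Fintype.sum_pow]
    
/-- `Γ_l` for `k`-XOR-SAT as a nonnegative combination of `k`-th powers of
Fourier coefficients. -/
lemma xga_Gam_eq (k l : ℕ) (ν : (Fin l → Bool) → ℝ) :
    Gam k (muXor k) l ν
      = ∑ Q : Finset (Fin l),
          (if Even Q.card then ((1 : ℝ) / 2) ^ l else 0) * (xga_F Q ν) ^ k := by
  have hsum : Gam k (muXor k) l ν =
      (1/2 : ℝ) * (∑ z : Fin k → Fin l → Bool,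
        (∏ i : Fin k, ν (z i)) *
          ∏ r : Fin l, (if xorClause k true (fun i => z i r) then (0 : ℝ) else 1))
      + (1/2 : ℝ) * (∑ z : Fin k → Fin l → Bool,
        (∏ i : Fin k, ν (z i)) *
          ∏ r : Fin l, (if xorClause k false (fun i => z i r) then (0 : ℝ) else 1)) := by
    unfold Gam muXor
    simp only [add_mul, Finset.sum_add_distrib, ite_mul, zero_mul]
    rw [Finset.sum_ite_eq' Finset.univ (xorClause k true),
      Finset.sum_ite_eq' Finset.univ (xorClause k false)]
    simp
  rw [hsum, xga_S_eq, xga_S_eq, Finset.mul_sum, Finset.mul_sum, ← Finset.sum_add_distrib]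
  refine Finset.sum_congr rfl fun Q _ => ?_
  have hs1 : (- xga_sgn true : ℝ) = 1 := by simp [xga_sgn]
  have hs2 : (- xga_sgn false : ℝ) = -1 := by simp [xga_sgn]
  rw [hs1, hs2, one_pow]
  by_cases h : Even Q.card
  · rw [if_pos h, h.neg_one_pow]; ring
  · rw [if_neg h, (Nat.not_even_iff_odd.mp h).neg_one_pow]; ring

lemma xga_convexOn_sum {E : Type*} [AddCommGroup E] [Module ℝ E] {t : Set E} (ht : Convex ℝ t)
    {ι : Type*} (s : Finset ι) (f : ι → E → ℝ) (hf : ∀ i ∈ s, ConvexOn ℝ t (f i)) :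
    ConvexOn ℝ t (fun x => ∑ i ∈ s, f i x) := by
  classical
  induction s using Finset.induction_on with
  | empty => simpa using convexOn_const (0 : ℝ) ht
  | insert a s' hni ih =>
    simp only [Finset.sum_insert hni]
    exact (hf a (Finset.mem_insert_self a s')).add
      (ih fun i hi => hf i (Finset.mem_insert_of_mem hi))

/-- **Convexity of `Γ_l` for `k`-XOR-SAT with `k` even:** the mapping `Γ_l` is convex on
the simplex of probability measures on `{-1,1}^l` for every `l ≥ 1` (hypothesis H2 holds
for `k`-XOR-SAT with `k` even). -/
theorem xorSAT_Gamma_convex (k : ℕ) (hk : 2 ≤ k) (hke : Even k) (l : ℕ) (hl : 1 ≤ l) :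
    ConvexOn ℝ (stdSimplex ℝ (Fin l → Bool)) (Gam k (muXor k) l) := by
  rw [show Gam k (muXor k) l = fun ν => ∑ Q : Finset (Fin l),
      (if Even Q.card then ((1 : ℝ) / 2) ^ l else 0) * (xga_F Q ν) ^ k
    from funext fun ν => xga_Gam_eq k l ν]
  refine xga_convexOn_sum (convex_stdSimplex ℝ _) _ _ fun Q _ => ?_
  have hpow : ConvexOn ℝ Set.univ fun x : ℝ => x ^ k := hke.convexOn_pow
  have hQ : ConvexOn ℝ (stdSimplex ℝ (Fin l → Bool)) fun ν => (xga_F Q ν) ^ k := by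
    refine ⟨convex_stdSimplex ℝ _, fun x _ y _ a b ha hb hab => ?_⟩
    show (xga_F Q (a • x + b • y)) ^ k ≤ a • (xga_F Q x) ^ k + b • (xga_F Q y) ^ k
    rw [xga_F_lin]
    simpa using hpow.2 (Set.mem_univ (xga_F Q x)) (Set.mem_univ (xga_F Q y)) ha hb hab
  have := hQ.smul (c := if Even Q.card then ((1:ℝ)/2)^l else 0) (by positivity)
  simpa [smul_eq_mul] using this
end
end

section
/- Let f : ℕ → ℝ be positive with f(n)/n bounded above, let Δ(n) = O(n/(log n)^{1+ε}) for some ε > 0, and let t(n) = o(n). Suppose that f(n₁ + n₂) + Δ(n₁ + n₂) ≥ f(n₁) + f(n₂) for all n₁, n₂ ≥ t(n₁ + n₂). Then f(n)/n converges as n → ∞. -/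
open Filter Finset
open scoped Topology

/-- gap lemma for the error potential. -/
private lemma phi_gap {g : ℕ → ℝ} (hg0 : ∀ j, 0 ≤ g j)
    (hganti : ∀ j j' : ℕ, 2 ≤ j → j ≤ j' → g j' ≤ g j)
    {s b : ℕ} (hs : 16 ≤ s) (hb : 4 * b ≤ 3 * s) :
    (s : ℝ) * g s + 8 * ∑ j ∈ range b, g j ≤ 8 * ∑ j ∈ range s, g j := by
  have hbs : b ≤ s := by omega
  have h4a : 4 * max b 2 ≤ 3 * s := by
    rcases le_total b 2 with h | h
    · rw [max_eq_right h]; omega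
    · rw [max_eq_left h]; omega
  have hmbs : max b 2 ≤ s := by omega
  have hsplit : ∑ j ∈ range s, g j
      = ∑ j ∈ range b, g j + ∑ j ∈ Ico b s, g j := by
    rw [range_eq_Ico, range_eq_Ico]
    exact (Finset.sum_Ico_consecutive g (Nat.zero_le b) hbs).symm
  have hsub : ∑ j ∈ Ico (max b 2) s, g j ≤ ∑ j ∈ Ico b s, g j := by
    apply Finset.sum_le_sum_of_subset_of_nonneg
    · apply Finset.Ico_subset_Ico (le_max_left _ _) le_rfl
    · intro j _ _; exact hg0 j
  have hcard : ((s - max b 2 : ℕ) : ℝ) * g s ≤ ∑ j ∈ Ico (max b 2) s, g j := by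
    have := Finset.card_nsmul_le_sum (Ico (max b 2) s) g (g s) (fun j hj => by
      rw [Finset.mem_Ico] at hj
      exact hganti j s (le_trans (le_max_right b 2) hj.1) hj.2.le)
    rwa [Nat.card_Ico, nsmul_eq_mul] at this
  have hcount : (s : ℝ) ≤ 8 * ((s - max b 2 : ℕ) : ℝ) := by
    have : s ≤ 8 * (s - max b 2) := by omega
    exact_mod_cast this
  have hgs : 0 ≤ g s := hg0 s
  nlinarith [hsub, hcard, Finset.sum_nonneg (fun j (_ : j ∈ range b) => hg0 j)]

/-- doubling along powers of two from a good base point. -/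
private lemma doubling (f Δ t : ℕ → ℝ) (g : ℕ → ℝ)
    (hsup : ∀ n₁ n₂ : ℕ, t (n₁ + n₂) ≤ (n₁ : ℝ) → t (n₁ + n₂) ≤ (n₂ : ℝ) →
      f n₁ + f n₂ ≤ f (n₁ + n₂) + Δ (n₁ + n₂))
    (m : ℕ) (hm : 1 ≤ m)
    (ht2 : ∀ s : ℕ, 2 * m ≤ s → t s ≤ (s : ℝ) / 2)
    (hΔg : ∀ s : ℕ, 2 * m ≤ s → |Δ s| ≤ (s : ℝ) * g s) :
    ∀ k : ℕ, f m / m - ∑ i ∈ range k, g (2 ^ (i + 1) * m)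
      ≤ f (2 ^ k * m) / ((2 ^ k * m : ℕ) : ℝ) := by
  intro k
  induction k with
  | zero => simp
  | succ k IH =>
    set a := 2 ^ k * m with ha
    have ha1 : 1 ≤ a := Nat.one_le_iff_ne_zero.mpr (by positivity)
    have haa : a + a = 2 ^ (k + 1) * m := by rw [ha, pow_succ]; ring
    have h2m : 2 * m ≤ a + a := by
      have : m ≤ a := Nat.le_mul_of_pos_left m (by positivity)
      omega
    have hA : (0 : ℝ) < (a : ℕ) := by exact_mod_cast ha1
    have hcast : ((a + a : ℕ) : ℝ) = 2 * (a : ℝ) := by push_cast; ring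
    have htc : t (a + a) ≤ (a : ℝ) := by
      have := ht2 (a + a) h2m
      rw [hcast] at this; linarith
    have h1 := hsup a a htc htc
    have h2 := hΔg (a + a) h2m
    have h3 : Δ (a + a) ≤ 2 * (a : ℝ) * g (a + a) := by
      rw [hcast] at h2
      calc Δ (a + a) ≤ |Δ (a + a)| := le_abs_self _
        _ ≤ 2 * (a : ℝ) * g (a + a) := h2
    have key : f a / (a : ℝ) - g (a + a) ≤ f (a + a) / ((a + a : ℕ) : ℝ) := by
      rw [hcast, le_div_iff₀ (by linarith : (0:ℝ) < 2 * (a:ℝ))]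
      have he : (f a / (a : ℝ)) * (2 * (a : ℝ)) = 2 * f a := by
        field_simp
      nlinarith [h1, h3]
    rw [Finset.sum_range_succ]
    have hsum : ∑ i ∈ range k, g (2 ^ (i + 1) * m) ≥ 0 →  True := fun _ => trivial
    rw [← haa]
    linarith [IH, key]

/-- the main decomposition bound, by strong induction. -/
private lemma main_ind (f Δ t : ℕ → ℝ) (g : ℕ → ℝ)
    (hf : ∀ n : ℕ, 0 < f n)
    (hsup : ∀ n₁ n₂ : ℕ, t (n₁ + n₂) ≤ (n₁ : ℝ) → t (n₁ + n₂) ≤ (n₂ : ℝ) →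
      f n₁ + f n₂ ≤ f (n₁ + n₂) + Δ (n₁ + n₂))
    (hg0 : ∀ j, 0 ≤ g j)
    (hganti : ∀ j j' : ℕ, 2 ≤ j → j ≤ j' → g j' ≤ g j)
    (m B : ℕ) (hm : 1 ≤ m) (hB16 : 16 ≤ B) (hBm : 4 * m ≤ B)
    (c : ℝ) (hc0 : 0 ≤ c)
    (hpiece : ∀ k : ℕ, c * ((2 ^ k * m : ℕ) : ℝ) ≤ f (2 ^ k * m))
    (ht4 : ∀ s : ℕ, B ≤ s → t s ≤ (s : ℝ) / 4)
    (hΔg : ∀ s : ℕ, B ≤ s → |Δ s| ≤ (s : ℝ) * g s) :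
    ∀ s : ℕ, c * s ≤ f s + c * B + 8 * ∑ j ∈ range s, g j := by
  intro s
  induction s using Nat.strong_induction_on with
  | _ s IH =>
  have hφ0 : 0 ≤ 8 * ∑ j ∈ range s, g j := by
    have := Finset.sum_nonneg (fun j (_ : j ∈ range s) => hg0 j); linarith
  by_cases hsB : s < B
  · have h1 : c * s ≤ c * B :=
      mul_le_mul_of_nonneg_left (by exact_mod_cast hsB.le) hc0
    linarith [hf s]
  push_neg at hsB
  have hms : m ≤ s := by omega
  set k := Nat.log 2 (s / m) with hkdef
  have hsm0 : s / m ≠ 0 := by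
    have : 1 ≤ s / m := (Nat.one_le_div_iff (by omega)).mpr hms
    omega
  have hk1 : 2 ^ k * m ≤ s := by
    calc 2 ^ k * m ≤ s / m * m := Nat.mul_le_mul_right m (Nat.pow_log_le_self 2 hsm0)
      _ ≤ s := Nat.div_mul_le_self s m
  have hk2 : s < 2 ^ (k + 1) * m := by
    have h : s / m < 2 ^ (k + 1) := by
      simpa [Nat.succ_eq_add_one, hkdef] using
        Nat.lt_pow_succ_log_self (by norm_num : 1 < 2) (s / m)
    exact (Nat.div_lt_iff_lt_mul (by omega : 0 < m)).mp h
  have hdbl : 2 ^ (k + 1) * m = 2 * (2 ^ k * m) := by rw [pow_succ]; ring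
  have hts4 := ht4 s hsB
  have hΔs : Δ s ≤ (s : ℝ) * g s := (le_abs_self _).trans (hΔg s hsB)
  -- helper to conclude in both cases
  have main : ∀ j b : ℕ, 2 ^ j * m + b = s → t s ≤ ((2 ^ j * m : ℕ) : ℝ) →
      t s ≤ (b : ℝ) → 4 * b ≤ 3 * s →
      c * s ≤ f s + c * B + 8 * ∑ j ∈ range s, g j := by
    intro j b hab hta htb h4b
    have hblt : b < s := by
      have : 1 ≤ 2 ^ j * m := Nat.one_le_iff_ne_zero.mpr (by positivity)
      omega
    have hIHb := IH b hblt
    have hsupab := hsup (2 ^ j * m) b (by rwa [hab]) (by rwa [hab])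
    rw [hab] at hsupab
    have hpj := hpiece j
    have hgap := phi_gap hg0 hganti (le_trans hB16 hsB) h4b
    have hcs : (s : ℝ) = ((2 ^ j * m : ℕ) : ℝ) + (b : ℝ) := by
      rw [← hab]; push_cast; ring
    have : c * s = c * ((2 ^ j * m : ℕ) : ℝ) + c * b := by rw [hcs]; ring
    rw [this]
    linarith [hsupab, hpj, hIHb, hgap, hΔs]
  by_cases hcase : t s ≤ ((s - 2 ^ k * m : ℕ) : ℝ)
  · -- case A : split off 2^k * m
    refine main k (s - 2 ^ k * m) (by omega) ?_ hcase (by omega)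
    -- t s ≤ 2^k*m  since s < 2 * (2^k*m)
    have h2 : (s : ℝ) ≤ 2 * ((2 ^ k * m : ℕ) : ℝ) := by
      have : s ≤ 2 * (2 ^ k * m) := by
        have : 2 ^ (k + 1) * m = 2 * (2 ^ k * m) := by rw [pow_succ]; ring
        omega
      exact_mod_cast this
    linarith
  · -- case B : split off 2^(k-1) * m
    have hk0 : 1 ≤ k := by
      by_contra h
      have : k = 0 := by omega
      rw [this] at hk2
      simp at hk2
      omega
    have hpow : 2 ^ (k - 1) * 2 = 2 ^ k ∧ 2 ^ (k - 1) * 4 = 2 ^ (k + 1) := by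
      constructor
      · rw [← pow_succ]; congr 1; omega
      · have : 2 ^ (k - 1) * 4 = 2 ^ (k - 1) * 2 * 2 := by ring
        rw [this, ← pow_succ, ← pow_succ]; congr 1; omega
    have h2a : 2 * (2 ^ (k - 1) * m) ≤ s := by
      have := hpow.1; nlinarith [hk1]
    have h4a : s < 4 * (2 ^ (k - 1) * m) := by
      have := hpow.2; nlinarith [hk2]
    refine main (k - 1) (s - 2 ^ (k - 1) * m) (by omega) ?_ ?_ (by omega)
    · -- t s ≤ 2^(k-1) m  since t s ≤ s/4 < 2^(k-1) m
      have : (s : ℝ) ≤ 4 * ((2 ^ (k - 1) * m : ℕ) : ℝ) := by exact_mod_cast h4a.le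
      linarith
    · -- t s ≤ s - 2^(k-1) m since that is ≥ s/2 ≥ s/4
      have hle : 2 ^ (k - 1) * m ≤ s := by omega
      have : ((s - 2 ^ (k - 1) * m : ℕ) : ℝ) = (s : ℝ) - ((2 ^ (k - 1) * m : ℕ) : ℝ) := by
        push_cast [hle]; ring
      rw [this]
      have h2a' : 2 * ((2 ^ (k - 1) * m : ℕ) : ℝ) ≤ (s : ℝ) := by exact_mod_cast h2a
      linarith

/-- the doubling error tail is uniformly small for large base `m`. -/
private lemma tail_small (K' ε : ℝ) (hK' : 0 ≤ K') (hε : 0 < ε) (η : ℝ) (hη : 0 < η) :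
    ∃ M₀ : ℕ, 3 ≤ M₀ ∧ ∀ m : ℕ, M₀ ≤ m → ∀ k : ℕ,
      ∑ i ∈ range k, K' / Real.log ((2 ^ (i + 1) * m : ℕ) : ℝ) ^ (1 + ε) ≤ η := by
  set p : ℝ := 1 + ε / 2 with hp
  have hp1 : 1 < p := by rw [hp]; linarith
  have hsummable : Summable (fun n : ℕ => 1 / ((n : ℝ) + 1) ^ p) := by
    have h := (summable_nat_add_iff 1).mpr (Real.summable_one_div_nat_rpow.mpr hp1)
    convert h using 2 with n
    · rfl
    push_cast
    ring_nf
  set T : ℝ := ∑' n : ℕ, 1 / ((n : ℝ) + 1) ^ p with hT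
  have hT0 : 0 ≤ T := tsum_nonneg (fun n => by positivity)
  have hlog2 : (0 : ℝ) < Real.log 2 := Real.log_pos (by norm_num)
  set C : ℝ := K' / Real.log 2 ^ p * T with hC
  have hC0 : 0 ≤ C := by
    apply mul_nonneg _ hT0
    apply div_nonneg hK' (Real.rpow_nonneg hlog2.le _)
  -- choose M₀ such that for m ≥ M₀, log m ≥ 1 and (log m)^(ε/2) ≥ C/η
  have htend : Tendsto (fun m : ℕ => Real.log m ^ (ε / 2)) atTop atTop := by
    exact (tendsto_rpow_atTop (by linarith)).comp
      (Real.tendsto_log_atTop.comp tendsto_natCast_atTop_atTop)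
  have hev : ∀ᶠ m : ℕ in atTop, max (C / η) 1 ≤ Real.log m ^ (ε / 2) :=
    htend.eventually_ge_atTop _
  have hev3 : ∀ᶠ m : ℕ in atTop, 3 ≤ m := eventually_ge_atTop 3
  obtain ⟨M₀, hM₀⟩ := (hev.and hev3).exists_forall_of_atTop
  refine ⟨max M₀ 3, le_max_right _ _, fun m hm k => ?_⟩
  obtain ⟨hm1, hm3⟩ := hM₀ m (le_trans (le_max_left _ _) hm)
  have hlogm1 : (1 : ℝ) ≤ Real.log m := by
    rw [show (1:ℝ) = Real.log (Real.exp 1) by simp]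
    apply Real.log_le_log (Real.exp_pos 1)
    calc Real.exp 1 ≤ 3 := by
          have := Real.exp_one_lt_d9; linarith
      _ ≤ (m : ℝ) := by exact_mod_cast hm3
  have hlogm0 : (0 : ℝ) < Real.log m := by linarith
  set Y : ℝ := Real.log m ^ (ε / 2) with hY
  have hY0 : 0 < Y := Real.rpow_pos_of_pos hlogm0 _
  set L : ℝ := Real.log 2 ^ p with hL
  have hL0 : 0 < L := Real.rpow_pos_of_pos hlog2 _
  have hterm : ∀ i : ℕ, K' / Real.log ((2 ^ (i + 1) * m : ℕ) : ℝ) ^ (1 + ε)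
      ≤ K' / L / Y * (1 / ((i : ℝ) + 1) ^ p) := by
    intro i
    set x : ℝ := ((i : ℝ) + 1) * Real.log 2 with hx
    have hx0 : 0 < x := by positivity
    set y : ℝ := Real.log m with hy
    have hlogeq : Real.log ((2 ^ (i + 1) * m : ℕ) : ℝ) = x + y := by
      push_cast
      rw [Real.log_mul (by positivity) (by positivity : (m : ℝ) ≠ 0), Real.log_pow]
      push_cast
      rw [hx, hy]
    have hxy0 : (0 : ℝ) < x + y := by linarith
    have hsplit : (x + y) ^ (1 + ε) = (x + y) ^ p * (x + y) ^ (ε / 2) := by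
      rw [← Real.rpow_add hxy0]
      congr 1
      rw [hp]; ring
    have hlow : x ^ p * y ^ (ε / 2) ≤ (x + y) ^ (1 + ε) := by
      rw [hsplit]
      apply mul_le_mul
      · exact Real.rpow_le_rpow hx0.le (by linarith) (by linarith)
      · exact Real.rpow_le_rpow (by linarith) (by linarith) (by linarith)
      · exact Real.rpow_nonneg (by linarith) _
      · exact Real.rpow_nonneg hxy0.le _
    have hxyp0 : 0 < x ^ p * y ^ (ε / 2) := by
      apply mul_pos (Real.rpow_pos_of_pos hx0 _) (Real.rpow_pos_of_pos hlogm0 _)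
    have h1 : K' / (x + y) ^ (1 + ε) ≤ K' / (x ^ p * y ^ (ε / 2)) :=
      div_le_div_of_nonneg_left hK' hxyp0 hlow
    rw [hlogeq]
    refine h1.trans (le_of_eq ?_)
    have hxp : x ^ p = ((i : ℝ) + 1) ^ p * L := by
      rw [hx, hL, Real.mul_rpow (by positivity) hlog2.le]
    rw [hxp]
    have hip0 : (0 : ℝ) < ((i : ℝ) + 1) ^ p := Real.rpow_pos_of_pos (by positivity) _
    have hYy : y ^ (ε / 2) = Y := by rw [hY, hy]
    rw [hYy]
    field_simp
  have hsum : ∑ i ∈ range k, K' / Real.log ((2 ^ (i + 1) * m : ℕ) : ℝ) ^ (1 + ε)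
      ≤ K' / L / Y * T := by
    calc ∑ i ∈ range k, K' / Real.log ((2 ^ (i + 1) * m : ℕ) : ℝ) ^ (1 + ε)
        ≤ ∑ i ∈ range k, K' / L / Y * (1 / ((i : ℝ) + 1) ^ p) :=
          Finset.sum_le_sum (fun i _ => hterm i)
      _ = K' / L / Y * ∑ i ∈ range k, 1 / ((i : ℝ) + 1) ^ p := by
          rw [Finset.mul_sum]
      _ ≤ K' / L / Y * T := by
          apply mul_le_mul_of_nonneg_left _ (by positivity)
          exact Summable.sum_le_tsum (range k) (fun i _ => by positivity) hsummable
  refine hsum.trans ?_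
  have hCY : K' / L / Y * T = C / Y := by
    rw [hC]; field_simp
  rw [hCY]
  rw [div_le_iff₀ hY0]
  have h1 : C / η ≤ Y := le_trans (le_max_left _ _) hm1
  calc C = η * (C / η) := by field_simp
    _ ≤ η * Y := by apply mul_le_mul_of_nonneg_left h1 hη.le

/-- **A pseudo-superadditivity convergence lemma.**
Let `f : ℕ → ℝ` be positive with `f n / n` bounded above, let `Δ(n) = O(n/(log n)^{1+ε})`
for some `ε > 0`, and let `t(n) = o(n)`.  If
`f(n₁) + f(n₂) ≤ f(n₁ + n₂) + Δ(n₁ + n₂)` whenever `n₁, n₂ ≥ t(n₁ + n₂)`,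
then `f n / n` converges as `n → ∞`. -/
theorem pseudo_superadditive_converges (f Δ t : ℕ → ℝ)
    (hf : ∀ n : ℕ, 0 < f n)
    (hbd : ∃ M : ℝ, ∀ n : ℕ, 1 ≤ n → f n ≤ M * n)
    (hΔ : ∃ ε : ℝ, 0 < ε ∧ ∃ K : ℝ,
      ∀ᶠ (n : ℕ) in atTop, |Δ n| ≤ K * n / Real.log n ^ (1 + ε))
    (ht : Tendsto (fun n : ℕ => t n / n) atTop (𝓝 0))
    (hsup : ∀ n₁ n₂ : ℕ, t (n₁ + n₂) ≤ (n₁ : ℝ) → t (n₁ + n₂) ≤ (n₂ : ℝ) →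
      f n₁ + f n₂ ≤ f (n₁ + n₂) + Δ (n₁ + n₂)) :
    ∃ L : ℝ, Tendsto (fun n : ℕ => f n / n) atTop (𝓝 L) := by
  obtain ⟨M, hM⟩ := hbd
  obtain ⟨ε, hε, K, hK⟩ := hΔ
  set a : ℕ → ℝ := fun n => f n / n with hadef
  have ha0 : ∀ n, 0 ≤ a n := by
    intro n
    rcases Nat.eq_zero_or_pos n with h | h
    · simp [hadef, h]
    · have : (0:ℝ) < n := by exact_mod_cast h
      exact le_of_lt (div_pos (hf n) this)
  have hbdd_above : IsBoundedUnder (· ≤ ·) atTop a := by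
    apply isBoundedUnder_of_eventually_le (a := max M 0)
    filter_upwards [eventually_ge_atTop 1] with n hn
    have hn0 : (0:ℝ) < n := by exact_mod_cast hn
    have : a n ≤ M := by
      rw [hadef]
      rw [div_le_iff₀ hn0]
      exact hM n hn
    exact this.trans (le_max_left _ _)
  have hbdd_below : IsBoundedUnder (· ≥ ·) atTop a :=
    isBoundedUnder_of_eventually_ge (Eventually.of_forall ha0)
  set L : ℝ := limsup a atTop with hL
  refine ⟨L, tendsto_of_liminf_eq_limsup ?_ rfl hbdd_above hbdd_below⟩
  refine le_antisymm (liminf_le_limsup hbdd_above hbdd_below) ?_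
  -- main part : L ≤ liminf a
  have key : ∀ η : ℝ, 0 < η → L - η ≤ liminf a atTop := by
    intro η hη
    set K' : ℝ := max K 0 with hK'def
    have hK'0 : 0 ≤ K' := le_max_right _ _
    set g : ℕ → ℝ := fun j => K' / Real.log j ^ (1 + ε) with hgdef
    have hg0 : ∀ j, 0 ≤ g j := by
      intro j
      apply div_nonneg hK'0
      apply Real.rpow_nonneg
      rcases Nat.eq_zero_or_pos j with h | h
      · simp [h]
      · exact Real.log_natCast_nonneg j
    have hganti : ∀ j j' : ℕ, 2 ≤ j → j ≤ j' → g j' ≤ g j := by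
      intro j j' h2 hjj
      apply div_le_div_of_nonneg_left hK'0
      · apply Real.rpow_pos_of_pos
        apply Real.log_pos
        exact_mod_cast Nat.lt_of_lt_of_le one_lt_two h2
      · apply Real.rpow_le_rpow
        · apply Real.log_natCast_nonneg
        · apply Real.log_le_log (by positivity)
          exact_mod_cast hjj
        · linarith
    have gtendsto : Tendsto g atTop (𝓝 0) := by
      apply Filter.Tendsto.const_div_atTop _ K'
      exact (tendsto_rpow_atTop (by linarith)).comp
        (Real.tendsto_log_atTop.comp tendsto_natCast_atTop_atTop)
    -- eventually hypotheses
    have hev1 : ∀ᶠ s : ℕ in atTop, t s ≤ (s : ℝ) / 4 := by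
      have h14 := ht.eventually (gt_mem_nhds (by norm_num : (0:ℝ) < 1/4))
      filter_upwards [h14, eventually_ge_atTop 1] with s hs hs1
      have hs0 : (0:ℝ) < s := by exact_mod_cast hs1
      rw [div_lt_iff₀ hs0] at hs
      linarith
    have hev2 : ∀ᶠ s : ℕ in atTop, |Δ s| ≤ (s : ℝ) * g s := by
      filter_upwards [hK, eventually_ge_atTop 2] with s hs h2
      have hD : (0:ℝ) < Real.log s ^ (1 + ε) := by
        apply Real.rpow_pos_of_pos
        apply Real.log_pos
        exact_mod_cast Nat.lt_of_lt_of_le one_lt_two h2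
      calc |Δ s| ≤ K * s / Real.log s ^ (1 + ε) := hs
        _ ≤ K' * s / Real.log s ^ (1 + ε) := by
            gcongr
            exact le_max_left _ _
        _ = (s : ℝ) * g s := by rw [hgdef]; field_simp
    obtain ⟨N, hN⟩ := eventually_atTop.mp (hev1.and hev2)
    obtain ⟨M₀, hM₀3, hM₀⟩ := tail_small K' ε hK'0 hε (η / 2) (by linarith)
    -- pick a good base point m
    have hfreq : ∃ᶠ n in atTop, L - η / 2 < a n := by
      apply frequently_lt_of_lt_limsup hbdd_below.isCoboundedUnder_le
      linarith
    obtain ⟨m, ham, hmge⟩ :=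
      (hfreq.and_eventually (eventually_ge_atTop (max N (max M₀ 3)))).exists
    have hmN : N ≤ m := le_trans (le_max_left _ _) hmge
    have hmM₀ : M₀ ≤ m := le_trans (le_max_left _ _) (le_trans (le_max_right _ _) hmge)
    have hm3 : 3 ≤ m := le_trans (le_max_right _ _) (le_trans (le_max_right _ _) hmge)
    have hm1 : 1 ≤ m := by omega
    -- doubling
    have ht2 : ∀ s : ℕ, 2 * m ≤ s → t s ≤ (s : ℝ) / 2 := by
      intro s hs
      have := (hN s (by omega)).1
      have hs0 : (0:ℝ) ≤ s := by positivity
      linarith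
    have hΔg2 : ∀ s : ℕ, 2 * m ≤ s → |Δ s| ≤ (s : ℝ) * g s :=
      fun s hs => (hN s (by omega)).2
    have hdb := doubling f Δ t g hsup m hm1 ht2 hΔg2
    have htail : ∀ k : ℕ, ∑ i ∈ range k, g (2 ^ (i + 1) * m) ≤ η / 2 := by
      intro k
      exact hM₀ m hmM₀ k
    -- the constant c
    set c : ℝ := max (L - η) 0 with hcdef
    have hc0 : 0 ≤ c := le_max_right _ _
    have hpiece : ∀ k : ℕ, c * ((2 ^ k * m : ℕ) : ℝ) ≤ f (2 ^ k * m) := by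
      intro k
      have hX : (0:ℝ) < ((2 ^ k * m : ℕ) : ℝ) := by
        have : 1 ≤ 2 ^ k * m := Nat.one_le_iff_ne_zero.mpr (by positivity)
        exact_mod_cast this
      rw [← le_div_iff₀ hX]
      apply max_le
      · calc L - η = (L - η / 2) - η / 2 := by ring
          _ ≤ f m / m - η / 2 := by
              have hham : L - η / 2 < f m / (m : ℝ) := ham
              linarith
          _ ≤ f m / m - ∑ i ∈ range k, g (2 ^ (i + 1) * m) := by
              have := htail k; linarith
          _ ≤ f (2 ^ k * m) / ((2 ^ k * m : ℕ) : ℝ) := hdb k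
      · exact le_of_lt (div_pos (hf _) hX)
    -- main induction
    set B : ℕ := max N (max (4 * m) 16) with hBdef
    have hB16 : 16 ≤ B := le_trans (le_max_right _ _) (le_max_right _ _)
    have hBm : 4 * m ≤ B := le_trans (le_max_left _ _) (le_max_right _ _)
    have hBN : N ≤ B := le_max_left _ _
    have hmain := main_ind f Δ t g hf hsup hg0 hganti m B hm1 hB16 hBm c hc0 hpiece
      (fun s hs => (hN s (by omega)).1) (fun s hs => (hN s (by omega)).2)
    -- deduce c ≤ liminf a
    have hliminf : c ≤ liminf a atTop := by
      apply le_of_forall_pos_le_add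
      intro θ hθ
      have herr : Tendsto
          (fun s : ℕ => c * B / (s : ℝ) + 8 * (((s:ℝ))⁻¹ * ∑ j ∈ range s, g j))
          atTop (𝓝 (0 + 8 * 0)) :=
        (tendsto_const_div_atTop_nhds_zero_nat _).add ((gtendsto.cesaro).const_mul 8)
      rw [show (0:ℝ) + 8 * 0 = 0 by ring] at herr
      have hev := herr.eventually (gt_mem_nhds hθ)
      have haev : ∀ᶠ s : ℕ in atTop, c - θ ≤ a s := by
        filter_upwards [hev, eventually_ge_atTop 1] with s hs hs1
        have hs0 : (0:ℝ) < s := by exact_mod_cast hs1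
        have h1 := hmain s
        have h2 : (c * s - c * B - 8 * ∑ j ∈ range s, g j) / s ≤ f s / s := by
          gcongr
          linarith
        have h3 : (c * s - c * B - 8 * ∑ j ∈ range s, g j) / s
            = c - (c * B / s + 8 * ((s:ℝ)⁻¹ * ∑ j ∈ range s, g j)) := by
          field_simp
          ring
        rw [h3] at h2
        have : c - θ ≤ c - (c * B / s + 8 * ((s:ℝ)⁻¹ * ∑ j ∈ range s, g j)) := by
          linarith
        exact this.trans h2
      have := le_liminf_of_le hbdd_above.isCoboundedUnder_ge haev
      linarith
    calc L - η ≤ c := le_max_left _ _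
      _ ≤ liminf a atTop := hliminf
  apply le_of_forall_pos_le_add
  intro η hη
  have := key η hη
  linarith
end

section
/- Fix k ≥ 2 and α > 0. Let F_m denote a random formula consisting of exactly m clauses drawn independently and uniformly at random from C_k(n). Then for every a ≥ 0 and every integer l ≥ 1, P{ Z(F_{⌊αn⌋}) < 2^{a+1} } − P{ Z(F_{⌊αn⌋+l}) < 2^{a} } ≤ 2·(1 − 2^{-k})^l. -/
open Filter
open scoped Classical Topology BigOperators

noncomputable section

/-- A `j`-clause on `n` Boolean variables: a set of `j` literals (variable–sign pairs)
over `j` distinct variables.  There are `C(n,j) * 2^j` such clauses. -/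
def Clause (n j : ℕ) : Type :=
  {L : Finset (Fin n × Bool) // L.card = j ∧ (L.image Prod.fst).card = j}

instance (n j : ℕ) : Fintype (Clause n j) := Subtype.fintype _

/-- A truth assignment satisfies a clause iff some literal of the clause evaluates to true. -/
def sat {n j : ℕ} (x : Fin n → Bool) (c : Clause n j) : Prop :=
  ∃ l ∈ c.1, x l.1 = l.2

/-- The number of assignments satisfying all of the `m` clauses `f 0, …, f (m-1)`. -/
def Zt {n j m : ℕ} (f : Fin m → Clause n j) : ℕ :=
  (Finset.univ.filter fun x : Fin n → Bool => ∀ a : Fin m, sat x (f a)).card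

/-- `ℙ{Z(F_m) < y}` where `F_m` consists of `m` clauses drawn independently and uniformly
at random from `C_k(n)`. -/
def PmUnif (k n m : ℕ) (y : ℝ) : ℝ :=
  (∑ f : Fin m → Clause n k, if (Zt f : ℝ) < y then (1 : ℝ) else 0) /
    (Fintype.card (Clause n k) : ℝ) ^ m

/-! ### Auxiliary lemmas -/

namespace AddClausesAux

variable {n k : ℕ}

/-- In a clause, the sign of a variable is unique. -/
lemma snd_unique (c : Clause n k) {a : Fin n} {b b' : Bool}
    (h : (a, b) ∈ c.1) (h' : (a, b') ∈ c.1) : b = b' := by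
  have hinj : Set.InjOn Prod.fst (c.1 : Set (Fin n × Bool)) := by
    rw [← Finset.card_image_iff]
    rw [c.2.1, c.2.2]
  have heq : (a, b) = (a, b') := hinj (Finset.mem_coe.mpr h) (Finset.mem_coe.mpr h') rfl
  exact congrArg Prod.snd heq

lemma mem_clause_iff (c : Clause n k) (a : Fin n) (b : Bool) :
    (a, b) ∈ c.1 ↔ a ∈ c.1.image Prod.fst ∧ (((a, true) ∈ c.1) ↔ b = true) := by
  constructor
  · intro h
    refine ⟨Finset.mem_image_of_mem _ h, ?_⟩
    constructor
    · intro ht; exact snd_unique c h ht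
    · intro hb; subst hb; exact h
  · rintro ⟨ha, hiff⟩
    obtain ⟨⟨a', b'⟩, hm, hfst⟩ := Finset.mem_image.mp ha
    simp only at hfst; subst hfst
    have : b' = b := by
      cases b' with
      | true => exact (hiff.mp hm).symm
      | false =>
        cases b with
        | true => exact absurd (snd_unique c (hiff.mpr rfl) hm) (by simp)
        | false => rfl
    subst this; exact hm

lemma image_fst_image (s : Finset (Fin n)) (f : Fin n → Bool) :
    (s.image fun v => (v, f v)).image Prod.fst = s := by
  ext v; simp

lemma card_image_pair (s : Finset (Fin n)) (f : Fin n → Bool) :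
    (s.image fun v => (v, f v)).card = s.card :=
  Finset.card_image_of_injective _ (fun v w h => congrArg Prod.fst h)

/-- The "violating" clause on the same variables as `c`, relative to assignment `x`. -/
def vio (x : Fin n → Bool) (c : Clause n k) : Clause n k :=
  ⟨(c.1.image Prod.fst).image (fun v => (v, !x v)),
    by rw [card_image_pair, c.2.2],
    by rw [image_fst_image, c.2.2]⟩

lemma not_sat_vio (x : Fin n → Bool) (c : Clause n k) : ¬ sat x (vio x c) := by
  rintro ⟨⟨a, b⟩, hm, hv⟩
  simp only [vio, Finset.mem_image] at hm
  obtain ⟨v, _, hveq⟩ := hm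
  obtain ⟨rfl, rfl⟩ : v = a ∧ (!x v) = b := by
    exact ⟨congrArg Prod.fst hveq, congrArg Prod.snd hveq⟩
  simp at hv

lemma varset_vio (x : Fin n → Bool) (c : Clause n k) :
    (vio x c).1.image Prod.fst = c.1.image Prod.fst :=
  image_fst_image _ _

/-- The number of clauses is at most `2^k` times the number of clauses violated by `x`. -/
lemma card_le_vio (x : Fin n → Bool) :
    Fintype.card (Clause n k) ≤
      2 ^ k * (Finset.univ.filter fun c : Clause n k => ¬ sat x c).card := by
  have h1 : (Finset.univ : Finset (Clause n k)).card ≤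
      2 ^ k * (Finset.univ.image (vio (k := k) x)).card := by
    apply Finset.card_le_mul_card_image
    intro d hd
    -- fiber of `vio x` over `d` injects into functions from variables of `d` to `Bool`
    set S : Finset (Fin n) := d.1.image Prod.fst with hS
    have hScard : S.card = k := d.2.2
    have hinj : Set.InjOn (fun c : Clause n k => fun v : {y // y ∈ S} => ((v.1, true) ∈ c.1 : Prop))
        ((Finset.univ.filter fun c => vio x c = d) : Set (Clause n k)) := by
      intro c hc c' hc' hfun
      simp only [Finset.coe_filter, Set.mem_setOf_eq] at hc hc'
      have hvc : c.1.image Prod.fst = S := by rw [hS, ← hc.2, varset_vio]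
      have hvc' : c'.1.image Prod.fst = S := by rw [hS, ← hc'.2, varset_vio]
      apply Subtype.ext
      apply Finset.ext
      rintro ⟨a, b⟩
      rw [mem_clause_iff c, mem_clause_iff c', hvc, hvc']
      constructor
      · rintro ⟨haS, hb⟩
        refine ⟨haS, ?_⟩
        have := congrFun hfun ⟨a, haS⟩
        simp only at this
        rw [← this]; exact hb
      · rintro ⟨haS, hb⟩
        refine ⟨haS, ?_⟩
        have := congrFun hfun ⟨a, haS⟩
        simp only at this
        rw [this]; exact hb
    have := Finset.card_le_card_of_injOn
      (f := fun c : Clause n k => fun v : {y // y ∈ S} => ((v.1, true) ∈ c.1 : Prop))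
      (fun c _ => Finset.mem_univ _) hinj
    calc (Finset.univ.filter fun c : Clause n k => vio x c = d).card
        ≤ (Finset.univ : Finset ({y // y ∈ S} → Prop)).card := this
      _ = 2 ^ k := by
          rw [Finset.card_univ, Fintype.card_fun, Fintype.card_prop, Fintype.card_coe, hScard]
  have h2 : ((Finset.univ : Finset (Clause n k)).image (vio (k := k) x)).card ≤
      (Finset.univ.filter fun c : Clause n k => ¬ sat x c).card := by
    apply Finset.card_le_card
    intro d hd
    obtain ⟨c, _, rfl⟩ := Finset.mem_image.mp hd
    exact Finset.mem_filter.mpr ⟨Finset.mem_univ _, not_sat_vio x c⟩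
  calc Fintype.card (Clause n k) = (Finset.univ : Finset (Clause n k)).card := rfl
    _ ≤ 2 ^ k * (Finset.univ.image (vio (k := k) x)).card := h1
    _ ≤ 2 ^ k * (Finset.univ.filter fun c : Clause n k => ¬ sat x c).card :=
        Nat.mul_le_mul_left _ h2

/-- For every assignment `x`, the number of clauses satisfied by `x` is at most
`(1 - 2⁻ᵏ)` times the total number of clauses. -/
lemma satCount_le (x : Fin n → Bool) :
    ((Finset.univ.filter fun c : Clause n k => sat x c).card : ℝ) ≤
      (1 - (2 : ℝ)⁻¹ ^ k) * (Fintype.card (Clause n k) : ℝ) := by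
  have hsplit : (Finset.univ.filter fun c : Clause n k => sat x c).card +
      (Finset.univ.filter fun c : Clause n k => ¬ sat x c).card =
      Fintype.card (Clause n k) :=
    Finset.card_filter_add_card_filter_not _
  have hvio := card_le_vio (k := k) x
  have h2k : (0 : ℝ) < 2 ^ k := by positivity
  set S := (Finset.univ.filter fun c : Clause n k => sat x c).card
  set V := (Finset.univ.filter fun c : Clause n k => ¬ sat x c).card
  set N := Fintype.card (Clause n k)
  have hV : (N : ℝ) ≤ 2 ^ k * V := by exact_mod_cast hvio
  have hSV : (S : ℝ) = N - V := by
    have : (S : ℝ) + V = N := by exact_mod_cast hsplit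
    linarith
  have hinv : (2 : ℝ)⁻¹ ^ k = ((2 : ℝ) ^ k)⁻¹ := by rw [inv_pow]
  rw [hSV, hinv]
  have : (N : ℝ) / 2 ^ k ≤ V := by
    rw [div_le_iff₀ h2k]; linarith [hV]
  have hN : (0 : ℝ) ≤ N := Nat.cast_nonneg _
  calc (N : ℝ) - V ≤ N - N / 2 ^ k := by linarith
    _ = (1 - ((2:ℝ) ^ k)⁻¹) * N := by field_simp
  
/-- There exists at least one clause when `k ≤ n`. -/
lemma card_clause_pos (hkn : k ≤ n) : 0 < Fintype.card (Clause n k) := by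
  obtain ⟨S, -, hScard⟩ := Finset.exists_subset_card_eq (s := (Finset.univ : Finset (Fin n))) (n := k)
    (by simpa using hkn)
  have hc1 : (S.image fun v => (v, true)).card = k := by
    rw [Finset.card_image_of_injective _ (fun v w h => congrArg Prod.fst h), hScard]
  have hc2 : ((S.image fun v => (v, true)).image Prod.fst).card = k := by
    rw [Finset.image_image]
    have : (Prod.fst ∘ fun v : Fin n => (v, true)) = id := rfl
    rw [this, Finset.image_id, hScard]
  have : Nonempty (Clause n k) := ⟨⟨S.image fun v => (v, true), hc1, hc2⟩⟩
  exact Fintype.card_pos_iff.mpr this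

/-- The equivalence between pairs of tuples and appended tuples. -/
def appEquiv (C : Type*) (m l : ℕ) : ((Fin m → C) × (Fin l → C)) ≃ (Fin (m + l) → C) where
  toFun p := Fin.append p.1 p.2
  invFun f := (fun i => f (Fin.castAdd l i), fun j => f (Fin.natAdd m j))
  left_inv p := by
    obtain ⟨g, h⟩ := p
    refine Prod.ext ?_ ?_ <;> funext i <;>
      simp [Fin.append_left, Fin.append_right]
  right_inv f := by
    funext i
    induction i using Fin.addCases with
    | left i => simp [Fin.append_left]
    | right i => simp [Fin.append_right]

lemma Zt_append_eq {m l : ℕ} (g : Fin m → Clause n k) (h : Fin l → Clause n k) :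
    (Zt (Fin.append g h) : ℝ) =
      ∑ x ∈ (Finset.univ.filter fun x : Fin n → Bool => ∀ a, sat x (g a)),
        ∏ b : Fin l, (if sat x (h b) then (1 : ℝ) else 0) := by
  have hfil : (Finset.univ.filter fun x : Fin n → Bool =>
        ∀ i : Fin (m + l), sat x (Fin.append g h i)) =
      (Finset.univ.filter fun x : Fin n → Bool => ∀ a, sat x (g a)).filter
        (fun x => ∀ b, sat x (h b)) := by
    rw [Finset.filter_filter]
    apply Finset.filter_congr
    intro x _
    constructor
    · intro hall
      refine ⟨fun a => ?_, fun b => ?_⟩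
      · have := hall (Fin.castAdd l a); rwa [Fin.append_left] at this
      · have := hall (Fin.natAdd m b); rwa [Fin.append_right] at this
    · rintro ⟨h1, h2⟩ i
      induction i using Fin.addCases with
      | left i => rw [Fin.append_left]; exact h1 i
      | right i => rw [Fin.append_right]; exact h2 i
  rw [Zt, hfil]
  rw [Finset.card_filter]
  push_cast
  apply Finset.sum_congr rfl
  intro x _
  rw [Fintype.prod_boole]
  simp

end AddClausesAux

set_option maxHeartbeats 2000000 in
open AddClausesAux in
/-- **Adding `l` uniform clauses decreases the number of solutions geometrically:**
for the uniform model with exactly `m` clauses,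
`ℙ{Z(F_{⌊αn⌋}) < 2^{a+1}} - ℙ{Z(F_{⌊αn⌋+l}) < 2^a} ≤ 2 (1 - 2^{-k})^l`. -/
theorem add_clauses_bound (k n : ℕ) (hk : 2 ≤ k) (hkn : k ≤ n) (α : ℝ) (hα : 0 < α)
    (a : ℝ) (ha : 0 ≤ a) (l : ℕ) (hl : 1 ≤ l) :
    PmUnif k n ⌊α * (n : ℝ)⌋₊ ((2 : ℝ) ^ (a + 1)) -
        PmUnif k n (⌊α * (n : ℝ)⌋₊ + l) ((2 : ℝ) ^ a) ≤
      2 * (1 - (2 : ℝ)⁻¹ ^ k) ^ l := by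
  set m := ⌊α * (n : ℝ)⌋₊ with hm
  set N : ℝ := (Fintype.card (Clause n k) : ℝ) with hNdef
  have hN : (0 : ℝ) < N := by rw [hNdef]; exact_mod_cast card_clause_pos hkn
  set p : ℝ := 1 - (2 : ℝ)⁻¹ ^ k with hpdef
  have hp0 : (0 : ℝ) ≤ p := by
    have h1 : (2 : ℝ)⁻¹ ^ k ≤ 1 ^ k := pow_le_pow_left₀ (by norm_num) (by norm_num) k
    simp only [one_pow] at h1
    rw [hpdef]
    linarith
  set y : ℝ := (2 : ℝ) ^ a with hy
  have hy0 : (0 : ℝ) < y := Real.rpow_pos_of_pos (by norm_num) a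
  have hy2 : (2 : ℝ) ^ (a + 1) = 2 * y := by
    rw [hy, Real.rpow_add (by norm_num), Real.rpow_one]; ring
  -- key per-`g` bound
  have key : ∀ g : Fin m → Clause n k,
      ∑ h : Fin l → Clause n k,
        ((if (Zt g : ℝ) < 2 * y then (1 : ℝ) else 0) -
          (if (Zt (Fin.append g h) : ℝ) < y then (1 : ℝ) else 0)) ≤
      2 * (p * N) ^ l := by
    intro g
    have hpN : (0 : ℝ) ≤ (p * N) ^ l := by positivity
    by_cases hg : (Zt g : ℝ) < 2 * y
    · simp only [if_pos hg]
      -- Markov-type bound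
      have hsum : ∑ h : Fin l → Clause n k, (Zt (Fin.append g h) : ℝ) ≤
          (Zt g : ℝ) * (p * N) ^ l := by
        have heq : ∀ h : Fin l → Clause n k, (Zt (Fin.append g h) : ℝ) =
            ∑ x ∈ (Finset.univ.filter fun x : Fin n → Bool => ∀ a, sat x (g a)),
              ∏ b : Fin l, (if sat x (h b) then (1 : ℝ) else 0) := fun h => Zt_append_eq g h
        calc ∑ h : Fin l → Clause n k, (Zt (Fin.append g h) : ℝ)
            = ∑ h : Fin l → Clause n k,
                ∑ x ∈ (Finset.univ.filter fun x : Fin n → Bool => ∀ a, sat x (g a)),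
                  ∏ b : Fin l, (if sat x (h b) then (1 : ℝ) else 0) :=
              Finset.sum_congr rfl fun h _ => heq h
          _ = ∑ x ∈ (Finset.univ.filter fun x : Fin n → Bool => ∀ a, sat x (g a)),
                ∑ h : Fin l → Clause n k,
                  ∏ b : Fin l, (if sat x (h b) then (1 : ℝ) else 0) := Finset.sum_comm
          _ = ∑ x ∈ (Finset.univ.filter fun x : Fin n → Bool => ∀ a, sat x (g a)),
                (∑ c : Clause n k, if sat x c then (1 : ℝ) else 0) ^ l := by
              apply Finset.sum_congr rfl
              intro x _
              rw [Finset.sum_pow' Finset.univ (fun c : Clause n k => if sat x c then (1:ℝ) else 0) l]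
              rw [← Fintype.piFinset_univ]
          _ ≤ ∑ _x ∈ (Finset.univ.filter fun x : Fin n → Bool => ∀ a, sat x (g a)),
                (p * N) ^ l := by
              apply Finset.sum_le_sum
              intro x _
              apply pow_le_pow_left₀
              · positivity
              · rw [Finset.sum_boole]
                exact satCount_le x
          _ = (Zt g : ℝ) * (p * N) ^ l := by
              rw [Finset.sum_const, nsmul_eq_mul]; rfl
      have hmarkov : ∑ h : Fin l → Clause n k,
          ((1 : ℝ) - if (Zt (Fin.append g h) : ℝ) < y then (1 : ℝ) else 0) ≤
          (∑ h : Fin l → Clause n k, (Zt (Fin.append g h) : ℝ)) / y := by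
        rw [Finset.sum_div]
        apply Finset.sum_le_sum
        intro h _
        by_cases hz : (Zt (Fin.append g h) : ℝ) < y
        · rw [if_pos hz]; simp; positivity
        · rw [if_neg hz]
          push_neg at hz
          rw [le_div_iff₀ hy0]
          linarith
      calc ∑ h : Fin l → Clause n k,
            ((1 : ℝ) - if (Zt (Fin.append g h) : ℝ) < y then (1 : ℝ) else 0)
          ≤ (∑ h : Fin l → Clause n k, (Zt (Fin.append g h) : ℝ)) / y := hmarkov
        _ ≤ ((Zt g : ℝ) * (p * N) ^ l) / y := (div_le_div_iff_of_pos_right hy0).mpr hsum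
        _ ≤ (2 * y * (p * N) ^ l) / y :=
            (div_le_div_iff_of_pos_right hy0).mpr
              (mul_le_mul_of_nonneg_right (le_of_lt hg) hpN)
        _ = 2 * (p * N) ^ l := by field_simp
    · simp only [if_neg hg]
      have : ∀ h : Fin l → Clause n k,
          ((0 : ℝ) - if (Zt (Fin.append g h) : ℝ) < y then (1 : ℝ) else 0) ≤ 0 := by
        intro h; by_cases hz : (Zt (Fin.append g h) : ℝ) < y <;> simp [hz]
      calc ∑ h : Fin l → Clause n k,
            ((0 : ℝ) - if (Zt (Fin.append g h) : ℝ) < y then (1 : ℝ) else 0)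
          ≤ ∑ _h : Fin l → Clause n k, (0 : ℝ) := Finset.sum_le_sum fun h _ => this h
        _ = 0 := Finset.sum_const_zero
        _ ≤ 2 * (p * N) ^ l := by positivity
  -- rewrite the two probabilities over the common sample space
  have hsum1 : PmUnif k n m (2 * y) =
      (∑ g : Fin m → Clause n k, ∑ _h : Fin l → Clause n k,
        (if (Zt g : ℝ) < 2 * y then (1 : ℝ) else 0)) / N ^ (m + l) := by
    rw [PmUnif]
    have : ∀ g : Fin m → Clause n k,
        ∑ _h : Fin l → Clause n k, (if (Zt g : ℝ) < 2 * y then (1 : ℝ) else 0) =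
        (if (Zt g : ℝ) < 2 * y then (1 : ℝ) else 0) * N ^ l := by
      intro g
      rw [Finset.sum_const, Finset.card_univ, nsmul_eq_mul, Fintype.card_fun,
        Fintype.card_fin]
      push_cast
      rw [← hNdef]
      ring
    rw [Finset.sum_congr rfl fun g _ => this g, ← Finset.sum_mul, pow_add,
      mul_div_mul_right _ _ (by positivity : (N : ℝ) ^ l ≠ 0)]
  have hsum2 : PmUnif k n (m + l) y =
      (∑ g : Fin m → Clause n k, ∑ h : Fin l → Clause n k,
        (if (Zt (Fin.append g h) : ℝ) < y then (1 : ℝ) else 0)) / N ^ (m + l) := by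
    rw [PmUnif]
    congr 1
    rw [← Equiv.sum_comp (appEquiv (Clause n k) m l)
      (fun f => if (Zt f : ℝ) < y then (1 : ℝ) else 0)]
    rw [Fintype.sum_prod_type]
    rfl
  rw [hy2, hsum1, hsum2, div_sub_div_same, ← Finset.sum_sub_distrib]
  rw [div_le_iff₀ (by positivity : (0:ℝ) < N ^ (m + l))]
  calc ∑ g : Fin m → Clause n k,
        ((∑ _h : Fin l → Clause n k, (if (Zt g : ℝ) < 2 * y then (1 : ℝ) else 0)) -
          ∑ h : Fin l → Clause n k, (if (Zt (Fin.append g h) : ℝ) < y then (1 : ℝ) else 0))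
      = ∑ g : Fin m → Clause n k, ∑ h : Fin l → Clause n k,
          ((if (Zt g : ℝ) < 2 * y then (1 : ℝ) else 0) -
            (if (Zt (Fin.append g h) : ℝ) < y then (1 : ℝ) else 0)) := by
        apply Finset.sum_congr rfl
        intro g _
        rw [Finset.sum_sub_distrib]
    _ ≤ ∑ _g : Fin m → Clause n k, 2 * (p * N) ^ l :=
        Finset.sum_le_sum fun g _ => key g
    _ = N ^ m * (2 * (p * N) ^ l) := by
        rw [Finset.sum_const, Finset.card_univ, nsmul_eq_mul, Fintype.card_fun,
          Fintype.card_fin]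
        push_cast
        try rw [← hNdef]
        try ring
    _ = 2 * p ^ l * N ^ (m + l) := by
        rw [mul_pow, pow_add]; ring
end
end

section
/- Let f be a Boolean formula on n variables, let C_i^{(1)} denote 1-clauses (single literals) drawn independently and uniformly from C_1(n), and C_i^{(k)} denote k-clauses drawn independently and uniformly from C_k(n). Fix an integer D ≥ 1 and y ∈ ℝ. Then for any unbounded increasing sequence h(n) and any ε > 0, for all n large enough: P{ Z(f ∧ C_1^{(1)} ∧ … ∧ C_D^{(1)}) < y } ≤ P{ Z(f ∧ C_1^{(k)} ∧ … ∧ C_{h(n)}^{(k)}) < k^D·y } + ε. -/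
open Filter
open scoped Classical Topology BigOperators

noncomputable section

/-- The number of assignments satisfying the (arbitrary) Boolean formula `f` together with
all of the `m` appended `j`-clauses. -/
def Zf {n j m : ℕ} (f : (Fin n → Bool) → Bool) (c : Fin m → Clause n j) : ℕ :=
  (Finset.univ.filter fun x : Fin n → Bool =>
    f x = true ∧ ∀ a : Fin m, sat x (c a)).card

/-- `ℙ{Z(f ∧ C₁ ∧ … ∧ C_m) < y}` where `C₁, …, C_m` are `j`-clauses drawn independently
and uniformly at random from `C_j(n)`. -/
def Pf (n j m : ℕ) (f : (Fin n → Bool) → Bool) (y : ℝ) : ℝ :=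
  (∑ c : Fin m → Clause n j, if (Zf f c : ℝ) < y then (1 : ℝ) else 0) /
    (Fintype.card (Clause n j) : ℝ) ^ m

namespace AuxProof
open Finset
variable {n k : ℕ}

def mkUnit (l : Fin n × Bool) : Clause n 1 := ⟨{l}, by simp⟩

lemma unit_exists (u : Clause n 1) : ∃ l, u.1 = {l} := Finset.card_eq_one.1 u.2.1

def unitLit (u : Clause n 1) : Fin n × Bool := (unit_exists u).choose

lemma unitLit_spec (u : Clause n 1) : u.1 = {unitLit u} := (unit_exists u).choose_spec

lemma mkUnit_unitLit (u : Clause n 1) : mkUnit (unitLit u) = u :=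
  Subtype.ext (unitLit_spec u).symm

lemma unitLit_mkUnit (l : Fin n × Bool) : unitLit (mkUnit l) = l := by
  have h := unitLit_spec (mkUnit l)
  simpa [mkUnit, eq_comm, Finset.singleton_inj] using h

def unitEquiv : Clause n 1 ≃ Fin n × Bool where
  toFun := unitLit
  invFun := mkUnit
  left_inv := mkUnit_unitLit
  right_inv := unitLit_mkUnit

lemma card_unit : Fintype.card (Clause n 1) = 2 * n := by
  rw [Fintype.card_congr (unitEquiv (n := n))]
  simp [Fintype.card_prod, Nat.mul_comm]

/-- structural lemma: a clause's literal set is determined by its variable set and signs. -/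
lemma fst_injOn (c : Clause n k) : Set.InjOn Prod.fst (c.1 : Set (Fin n × Bool)) := by
  exact Finset.injOn_of_card_image_eq (by rw [c.2.1, c.2.2])

lemma sign_determined (c : Clause n k) {v : Fin n} {b : Bool} (hv : (v, b) ∈ c.1) :
    b = decide ((v, true) ∈ c.1) := by
  by_cases h : (v, true) ∈ c.1
  · have : ((v, b) : Fin n × Bool) = (v, true) := fst_injOn c hv h rfl
    simp [this, h]
    exact (Prod.mk.injEq .. ▸ this).2
  · cases b with
    | true => exact absurd hv h
    | false => simp [h]


lemma clause_eq (c : Clause n k) :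
    c.1 = (c.1.image Prod.fst).attach.image
      (fun v => (v.1, decide ((v.1, true) ∈ c.1))) := by
  apply Finset.eq_of_subset_of_card_le
  · intro l hl
    obtain ⟨v, b⟩ := l
    have hv : v ∈ c.1.image Prod.fst := Finset.mem_image.2 ⟨(v, b), hl, rfl⟩
    refine Finset.mem_image.2 ⟨⟨v, hv⟩, Finset.mem_attach _ _, ?_⟩
    rw [← sign_determined c hl]
  · calc ((c.1.image Prod.fst).attach.image
        (fun v => (v.1, decide ((v.1, true) ∈ c.1)))).card
        ≤ (c.1.image Prod.fst).attach.card := Finset.card_image_le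
      _ = (c.1.image Prod.fst).card := Finset.card_attach
      _ = c.1.card := by rw [c.2.1, c.2.2]

lemma card_clause_le' : Fintype.card (Clause n k) ≤ n.choose k * 2 ^ k := by
  classical
  rw [← Finset.card_univ]
  rw [Finset.card_eq_sum_card_fiberwise
    (f := fun c : Clause n k => c.1.image Prod.fst)
    (t := Finset.univ.powersetCard k)
    (fun c _ => Finset.mem_powersetCard.2 ⟨Finset.subset_univ _, c.2.2⟩)]
  have hfib : ∀ W ∈ Finset.univ.powersetCard k,
      ((Finset.univ : Finset (Clause n k)).filter
        (fun c => c.1.image Prod.fst = W)).card ≤ 2 ^ k := by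
    intro W hW
    have hWcard : W.card = k := (Finset.mem_powersetCard.1 hW).2
    have : ((Finset.univ : Finset (Clause n k)).filter
        (fun c => c.1.image Prod.fst = W)).card ≤ (Finset.univ : Finset (↥W → Bool)).card := by
      apply Finset.card_le_card_of_injOn
        (fun c => (fun v => decide ((v.1, true) ∈ c.1)))
        (fun _ _ => Finset.mem_univ _)
      intro c hc c' hc' hg
      have hWc : c.1.image Prod.fst = W := (Finset.mem_filter.1 hc).2
      have hWc' : c'.1.image Prod.fst = W := (Finset.mem_filter.1 hc').2
      apply Subtype.ext
      have e1 := clause_eq c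
      have e2 := clause_eq c'
      rw [hWc] at e1
      rw [hWc'] at e2
      rw [e1, e2]
      apply Finset.image_congr
      intro v _
      have := congrFun hg v
      simp only [this]
    simpa [Finset.card_univ, Fintype.card_fun, hWcard] using this
  calc (∑ W ∈ Finset.univ.powersetCard k,
      ((Finset.univ : Finset (Clause n k)).filter (fun c => c.1.image Prod.fst = W)).card)
      ≤ ∑ _W ∈ Finset.univ.powersetCard k, 2 ^ k := Finset.sum_le_sum hfib
    _ = n.choose k * 2 ^ k := by
        rw [Finset.sum_const, Finset.card_powersetCard, Finset.card_univ, Fintype.card_fin,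
          smul_eq_mul]

lemma card_clause_pos' (hkn : k ≤ n) : 0 < Fintype.card (Clause n k) := by
  obtain ⟨W, -, hWcard⟩ := Finset.exists_subset_card_eq
    (s := (Finset.univ : Finset (Fin n))) (n := k) (by simpa using hkn)
  refine Fintype.card_pos_iff.2 ⟨⟨W.image (fun v => (v, true)), ?_, ?_⟩⟩
  · rw [Finset.card_image_of_injective _ (fun a b hab => (Prod.mk.injEq .. ▸ hab).1), hWcard]
  · rw [Finset.image_image]
    have : (Prod.fst ∘ fun v : Fin n => (v, true)) = id := rfl
    rw [this, Finset.image_id, hWcard]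


def subU (c : Clause n k) : Finset (Clause n 1) :=
  Finset.univ.filter fun u => u.1 ⊆ c.1

lemma mem_subU {c : Clause n k} {u : Clause n 1} : u ∈ subU c ↔ u.1 ⊆ c.1 := by
  simp [subU]

lemma mkUnit_mem_subU {c : Clause n k} {l : Fin n × Bool} (hl : l ∈ c.1) :
    mkUnit l ∈ subU c := by
  rw [mem_subU]
  simpa [mkUnit] using hl

lemma unitLit_mem {c : Clause n k} {u : Clause n 1} (hu : u ∈ subU c) :
    unitLit u ∈ c.1 := by
  have := mem_subU.1 hu
  rw [unitLit_spec u] at this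
  simpa using this

lemma card_subU (c : Clause n k) : (subU c).card = k := by
  have : (subU c).card = c.1.card := by
    apply Finset.card_bij' (fun u _ => unitLit u) (fun l _ => mkUnit l)
    · exact fun u hu => unitLit_mem hu
    · exact fun l hl => mkUnit_mem_subU hl
    · exact fun u _ => mkUnit_unitLit u
    · exact fun l _ => unitLit_mkUnit l
  exact this.trans c.2.1

def mkClause (W : Finset (Fin n)) (g : Fin n → Bool) (h : W.card = k) : Clause n k := by
  refine ⟨W.image (fun v => (v, g v)), ?_, ?_⟩
  · rw [Finset.card_image_of_injective _ (fun a b hab => (Prod.mk.injEq .. ▸ hab).1), h]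
  · rw [Finset.image_image]
    have : (Prod.fst ∘ fun v : Fin n => (v, g v)) = id := rfl
    rw [this, Finset.image_id, h]

lemma mkClause_fst (W : Finset (Fin n)) (g : Fin n → Bool) (h : W.card = k) :
    (mkClause W g h).1.image Prod.fst = W := by
  show (W.image (fun v => (v, g v))).image Prod.fst = W
  rw [Finset.image_image]
  have : (Prod.fst ∘ fun v : Fin n => (v, g v)) = id := rfl
  rw [this, Finset.image_id]

def goodK (S : Finset (Clause n 1)) : Finset (Clause n k) :=
  Finset.univ.filter fun c => subU c ⊆ S

lemma mkClause_mem_goodK {S : Finset (Clause n 1)} {W : Finset (Fin n)} {g : Fin n → Bool}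
    (h : W.card = k) (hg : ∀ v ∈ W, mkUnit (v, g v) ∈ S) :
    mkClause W g h ∈ goodK S := by
  rw [goodK, Finset.mem_filter]
  refine ⟨Finset.mem_univ _, fun u hu => ?_⟩
  have hl : unitLit u ∈ (mkClause W g h).1 := unitLit_mem hu
  obtain ⟨v, hv, hvl⟩ := Finset.mem_image.1 hl
  rw [← mkUnit_unitLit u, ← hvl]
  exact hg v hv


def beta (n k : ℕ) (x : ℝ) : ℝ := (max (x - (k : ℝ) / n) 0) ^ k / 2 ^ k

lemma beta_nonneg (x : ℝ) : 0 ≤ beta n k x := by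
  unfold beta; positivity

lemma beta_le_beta {x x' : ℝ} (h : max (x - (k:ℝ)/n) 0 ≤ max (x' - (k:ℝ)/n) 0) :
    beta n k x ≤ beta n k x' := by
  unfold beta
  have h2 : (max (x - (k:ℝ)/n) 0) ^ k ≤ (max (x' - (k:ℝ)/n) 0) ^ k :=
    pow_le_pow_left₀ (le_max_right _ _) h k
  have h3 : (0:ℝ) < 2 ^ k := by positivity
  exact div_le_div_of_nonneg_right h2 h3.le

lemma beta_mono {x x' : ℝ} (h : x ≤ x') : beta n k x ≤ beta n k x' :=
  beta_le_beta (max_le_max (by linarith) le_rfl)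


lemma E1 (hk1 : 1 ≤ k) (hkn : k ≤ n) (S : Finset (Clause n 1)) :
    beta n k ((S.card : ℝ) / (2 * n)) * (Fintype.card (Clause n k) : ℝ)
      ≤ ((goodK (k := k) S).card : ℝ) := by
  have hn : 0 < n := lt_of_lt_of_le hk1 hkn
  have hnR : (0:ℝ) < n := by exact_mod_cast hn
  set V₁ : Finset (Fin n) := Finset.univ.filter (fun v : Fin n => ∃ b, mkUnit (v, b) ∈ S)
    with hV
  set t := V₁.card with ht
  have hS2t : S.card ≤ 2 * t := by
    have h0 : S.card ≤ (V₁ ×ˢ (Finset.univ : Finset Bool)).card := by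
      apply Finset.card_le_card_of_injOn (fun u => unitLit u)
      · intro u hu
        rw [Finset.mem_coe, Finset.mem_product]
        refine ⟨?_, Finset.mem_univ _⟩
        rw [hV, Finset.mem_filter]
        refine ⟨Finset.mem_univ _, (unitLit u).2, ?_⟩
        have h2 : mkUnit ((unitLit u).1, (unitLit u).2) = u := by
          rw [Prod.mk.eta, mkUnit_unitLit]
        rw [h2]
        exact hu
      · intro u _ u' _ hh
        rw [← mkUnit_unitLit u, ← mkUnit_unitLit u']
        exact congrArg mkUnit hh
    have h1 : (V₁ ×ˢ (Finset.univ : Finset Bool)).card = t * 2 := by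
      rw [Finset.card_product, Finset.card_univ, Fintype.card_bool]
    omega
  have hσt : (S.card : ℝ) / (2 * n) ≤ (t : ℝ) / n := by
    rw [div_le_div_iff₀ (by positivity) hnR]
    have : (S.card : ℝ) ≤ 2 * t := by exact_mod_cast hS2t
    nlinarith
  by_cases htk : t < k
  · have h2 : (t : ℝ) / n ≤ (k : ℝ) / n := by
      gcongr
    have hneg : (S.card : ℝ) / (2 * n) - (k : ℝ) / n ≤ 0 := by linarith
    have hb : beta n k ((S.card : ℝ) / (2 * n)) = 0 := by
      unfold beta
      rw [max_eq_right hneg]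
      simp [zero_pow (show k ≠ 0 by omega)]
    rw [hb, zero_mul]
    positivity
  · push_neg at htk
    have hne : Nonempty (Clause n k) := Fintype.card_pos_iff.1 (card_clause_pos' hkn)
    set g : Fin n → Bool := fun v => decide (mkUnit (v, true) ∈ S) with hgdef
    have hgS : ∀ v ∈ V₁, mkUnit (v, g v) ∈ S := by
      intro v hv
      rw [hV, Finset.mem_filter] at hv
      obtain ⟨-, b, hb⟩ := hv
      by_cases hT : mkUnit (v, true) ∈ S
      · have hgt : g v = true := by simp [hgdef, hT]
        rw [hgt]; exact hT
      · have hbf : b = false := by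
          cases b with
          | true => exact absurd hb hT
          | false => rfl
        have hgf : g v = false := by simp [hgdef, hT]
        rw [hgf]; rw [hbf] at hb; exact hb
    have hgood : t.choose k ≤ (goodK (k := k) S).card := by
      rw [ht, ← Finset.card_powersetCard k V₁]
      apply Finset.card_le_card_of_injOn
        (fun W => if h : W.card = k then mkClause W g h else Classical.choice hne)
      · intro W hW
        have hWk : W.card = k := (Finset.mem_powersetCard.1 hW).2
        have hWs : W ⊆ V₁ := (Finset.mem_powersetCard.1 hW).1
        simp only [Finset.mem_coe, dif_pos hWk]
        exact mkClause_mem_goodK hWk (fun v hv => hgS v (hWs hv))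
      · intro W hW W' hW' hh
        have hWk : W.card = k := (Finset.mem_powersetCard.1 hW).2
        have hWk' : W'.card = k := (Finset.mem_powersetCard.1 hW').2
        simp only [dif_pos hWk, dif_pos hWk'] at hh
        rw [← mkClause_fst W g hWk, ← mkClause_fst W' g hWk', hh]
    have hNat : n.choose k * (t + 1 - k) ^ k ≤ t.choose k * n ^ k := by
      have h1 : (t + 1 - k) ^ k * n.descFactorial k ≤ t.descFactorial k * n ^ k :=
        Nat.mul_le_mul (Nat.pow_sub_le_descFactorial t k) (Nat.descFactorial_le_pow n k)
      rw [Nat.descFactorial_eq_factorial_mul_choose,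
        Nat.descFactorial_eq_factorial_mul_choose] at h1
      have h2 : k.factorial * ((t + 1 - k) ^ k * n.choose k)
          ≤ k.factorial * (t.choose k * n ^ k) := by
        calc k.factorial * ((t + 1 - k) ^ k * n.choose k)
            = (t + 1 - k) ^ k * (k.factorial * n.choose k) := by ring
          _ ≤ k.factorial * t.choose k * n ^ k := h1
          _ = k.factorial * (t.choose k * n ^ k) := by ring
      have h3 := Nat.le_of_mul_le_mul_left h2 (Nat.factorial_pos k)
      rwa [mul_comm (n.choose k)]
    have hKle : (Fintype.card (Clause n k) : ℝ) ≤ (n.choose k : ℝ) * 2 ^ k := by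
      exact_mod_cast card_clause_le'
    set km : ℝ := ((t + 1 - k : ℕ) : ℝ) with hkm
    have hcast : km = (t : ℝ) + 1 - k := by
      have hk1t : k ≤ t + 1 := le_trans htk (Nat.le_succ t)
      rw [hkm]
      push_cast [hk1t]
      ring
    have hmax : max ((S.card : ℝ) / (2 * n) - (k : ℝ) / n) 0 ≤ km / n := by
      apply max_le
      · have h5 : ((t:ℝ) - k)/(n:ℝ) ≤ ((t:ℝ) + 1 - k)/(n:ℝ) := by gcongr <;> linarith
        have h6 : ((t:ℝ) - k)/(n:ℝ) = (t:ℝ)/n - (k:ℝ)/n := sub_div _ _ _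
        rw [hcast]
        linarith
      · rw [hcast]
        have : (k:ℝ) ≤ (t:ℝ) := by exact_mod_cast htk
        apply div_nonneg (by linarith) hnR.le
    have hb2 : beta n k ((S.card : ℝ) / (2 * n)) ≤ (km / n) ^ k / 2 ^ k := by
      unfold beta
      have h7 : (max ((S.card : ℝ) / (2 * n) - (k:ℝ)/n) 0) ^ k ≤ (km / n) ^ k :=
        pow_le_pow_left₀ (le_max_right _ _) hmax k
      have h3 : (0:ℝ) < 2 ^ k := by positivity
      exact div_le_div_of_nonneg_right h7 h3.le
    have h2k : (0:ℝ) < 2 ^ k := by positivity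
    calc beta n k ((S.card : ℝ) / (2 * n)) * (Fintype.card (Clause n k) : ℝ)
        ≤ (km / n) ^ k / 2 ^ k * ((n.choose k : ℝ) * 2 ^ k) :=
          mul_le_mul hb2 hKle (Nat.cast_nonneg _) (by positivity)
      _ = (n.choose k : ℝ) * km ^ k / (n : ℝ) ^ k := by
          rw [div_pow]
          field_simp
      _ ≤ (t.choose k : ℝ) := by
          rw [div_le_iff₀ (by positivity), hkm]
          exact_mod_cast hNat
      _ ≤ ((goodK (k := k) S).card : ℝ) := by exact_mod_cast hgood


lemma jensen_beta (hk1 : 1 ≤ k) {M : Type} [Fintype M] (hM : 0 < Fintype.card M)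
    (x : M → ℝ) :
    beta n k ((∑ i, x i) / (Fintype.card M : ℝ))
      ≤ (∑ i, beta n k (x i)) / (Fintype.card M : ℝ) := by
  obtain ⟨k', rfl⟩ : ∃ k', k = k' + 1 := ⟨k - 1, by omega⟩
  unfold beta
  set κ : ℝ := ((k' + 1 : ℕ) : ℝ) / (n : ℝ) with hκ
  set N := (Fintype.card M : ℝ) with hN
  have hN0 : (0:ℝ) < N := by rw [hN]; exact_mod_cast hM
  set z : M → ℝ := fun i => max (x i - κ) 0 with hz
  have hz0 : ∀ i ∈ (Finset.univ : Finset M), 0 ≤ z i := fun i _ => le_max_right _ _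
  have step1 : max ((∑ i, x i) / N - κ) 0 ≤ (∑ i, z i) / N := by
    apply max_le
    · have h1 : ∑ i, (x i - κ) ≤ ∑ i, z i :=
        Finset.sum_le_sum (fun i _ => le_max_left _ _)
      have h2 : ∑ i, (x i - κ) = (∑ i, x i) - N * κ := by
        rw [Finset.sum_sub_distrib, Finset.sum_const, Finset.card_univ, hN]
        push_cast
        ring
      have h3 : (∑ i, x i) / N - κ = ((∑ i, x i) - N * κ) / N := by
        rw [sub_div, mul_comm N κ, mul_div_assoc, div_self hN0.ne', mul_one]
      rw [h3]
      apply div_le_div_of_nonneg_right (by linarith) hN0.le |>.trans_eq rfl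
    · positivity
  have step2 : ((∑ i, z i) / N) ^ (k' + 1) ≤ (∑ i, z i ^ (k' + 1)) / N := by
    have hpow : (∑ i, z i) ^ (k' + 1) / N ^ k' ≤ ∑ i, z i ^ (k' + 1) := by
      have := pow_sum_div_card_le_sum_pow hz0 k'
      simpa [Finset.card_univ, ← hN] using this
    rw [div_pow, div_le_div_iff₀ (by positivity) hN0]
    calc (∑ i, z i) ^ (k' + 1) * N
        = ((∑ i, z i) ^ (k' + 1) / N ^ k') * N ^ (k' + 1) := by
          field_simp
          ring
      _ ≤ (∑ i, z i ^ (k' + 1)) * N ^ (k' + 1) :=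
          mul_le_mul_of_nonneg_right hpow (by positivity)
  have h2k : (0:ℝ) < 2 ^ (k' + 1) := by positivity
  calc (max ((∑ i, x i) / N - κ) 0) ^ (k' + 1) / 2 ^ (k' + 1)
      ≤ ((∑ i, z i) / N) ^ (k' + 1) / 2 ^ (k' + 1) := by
        apply div_le_div_of_nonneg_right _ h2k.le
        exact pow_le_pow_left₀ (le_max_right _ _) step1 _
    _ ≤ ((∑ i, z i ^ (k' + 1)) / N) / 2 ^ (k' + 1) :=
        div_le_div_of_nonneg_right step2 h2k.le
    _ = (∑ i, z i ^ (k' + 1) / 2 ^ (k' + 1)) / N := by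
        rw [div_div, mul_comm N (2 ^ (k' + 1)), ← div_div, Finset.sum_div]
    _ = (∑ i, (max (x i - κ) 0) ^ (k' + 1) / 2 ^ (k' + 1)) / N := rfl

def psi (n k : ℕ) : ℕ → ℝ → ℝ
  | 0 => fun τ => τ
  | (D + 1) => fun τ => beta n k (psi n k D τ)

lemma psi_mono (D : ℕ) {x x' : ℝ} (h : x ≤ x') : psi n k D x ≤ psi n k D x' := by
  induction D with
  | zero => exact h
  | succ D ih => exact beta_mono ih

lemma psi_jensen (hk1 : 1 ≤ k) (D : ℕ) {M : Type} [Fintype M] (hM : 0 < Fintype.card M)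
    (x : M → ℝ) :
    psi n k D ((∑ i, x i) / (Fintype.card M : ℝ))
      ≤ (∑ i, psi n k D (x i)) / (Fintype.card M : ℝ) := by
  induction D with
  | zero => exact le_of_eq (by simp [psi])
  | succ D ih =>
      show beta n k (psi n k D _) ≤ _
      calc beta n k (psi n k D ((∑ i, x i) / (Fintype.card M : ℝ)))
          ≤ beta n k ((∑ i, psi n k D (x i)) / (Fintype.card M : ℝ)) := beta_mono ih
        _ ≤ (∑ i, beta n k (psi n k D (x i))) / (Fintype.card M : ℝ) :=
            jensen_beta hk1 hM _
        _ = (∑ i, psi n k (D + 1) (x i)) / (Fintype.card M : ℝ) := rfl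

def dseq (k : ℕ) (e : ℝ) : ℕ → ℝ
  | 0 => e
  | (j + 1) => (dseq k e j / 4) ^ k

lemma dseq_pos (hk1 : 1 ≤ k) {e : ℝ} (he : 0 < e) (j : ℕ) : 0 < dseq k e j := by
  induction j with
  | zero => exact he
  | succ j ih => exact pow_pos (by linarith) k

lemma dseq_le_one (hk1 : 1 ≤ k) {e : ℝ} (he : 0 < e) (he1 : e ≤ 1) (j : ℕ) :
    dseq k e j ≤ 1 := by
  induction j with
  | zero => exact he1
  | succ j ih =>
      have := dseq_pos hk1 he j
      apply pow_le_one₀ (by linarith) (by linarith)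

lemma dseq_anti (hk1 : 1 ≤ k) {e : ℝ} (he : 0 < e) (he1 : e ≤ 1) (j : ℕ) :
    dseq k e (j + 1) ≤ dseq k e j := by
  have h1 := dseq_pos hk1 he j
  have h2 := dseq_le_one hk1 he he1 j
  calc dseq k e (j + 1) = (dseq k e j / 4) ^ k := rfl
    _ ≤ dseq k e j / 4 := pow_le_of_le_one (by positivity) (by linarith) (by omega)
    _ ≤ dseq k e j := by linarith

lemma dseq_anti' (hk1 : 1 ≤ k) {e : ℝ} (he : 0 < e) (he1 : e ≤ 1) {i j : ℕ} (hij : i ≤ j) :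
    dseq k e j ≤ dseq k e i := by
  induction j with
  | zero => simp_all
  | succ j ih =>
      rcases Nat.lt_or_ge i (j+1) with hlt | hge
      · exact (dseq_anti hk1 he he1 j).trans (ih (by omega))
      · have : i = j + 1 := by omega
        rw [this]

lemma psi_ge_dseq (hk1 : 1 ≤ k) {e : ℝ} (he : 0 < e) (he1 : e ≤ 1) (D : ℕ)
    (hκ : (k : ℝ) / n ≤ dseq k e D / 2) :
    dseq k e D ≤ psi n k D e := by
  induction D with
  | zero => exact le_rfl
  | succ D ih =>
      have hmono : dseq k e (D + 1) ≤ dseq k e D := dseq_anti hk1 he he1 D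
      have hκD : (k : ℝ) / n ≤ dseq k e D / 2 := by
        have := dseq_anti hk1 he he1 D
        linarith
      have hpsi : dseq k e D ≤ psi n k D e := ih hκD
      show dseq k e (D+1) ≤ beta n k (psi n k D e)
      have h1 : dseq k e D / 2 ≤ max (psi n k D e - (k:ℝ)/n) 0 := by
        apply le_max_of_le_left
        have := dseq_pos hk1 he D
        linarith
      calc dseq k e (D + 1) = (dseq k e D / 4) ^ k := rfl
        _ = (dseq k e D / 2) ^ k / 2 ^ k := by
            rw [← div_pow]
            ring_nf
        _ ≤ (max (psi n k D e - (k:ℝ)/n) 0) ^ k / 2 ^ k := by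
            apply div_le_div_of_nonneg_right _ (by positivity)
            have := dseq_pos hk1 he D
            exact pow_le_pow_left₀ (by linarith) h1 k
        _ = beta n k (psi n k D e) := rfl


def Bad (n k D : ℕ) (T : Finset (Fin D → Clause n 1)) : Finset (Fin D → Clause n k) :=
  Finset.univ.filter fun c => ∀ u : Fin D → Clause n 1, (∀ i, u i ∈ subU (c i)) → u ∈ T

lemma mem_Bad {D : ℕ} {T : Finset (Fin D → Clause n 1)} {c : Fin D → Clause n k} :
    c ∈ Bad n k D T ↔ ∀ u : Fin D → Clause n 1, (∀ i, u i ∈ subU (c i)) → u ∈ T := by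
  simp [Bad]

lemma mem_goodK {S : Finset (Clause n 1)} {c : Clause n k} :
    c ∈ goodK (k := k) S ↔ subU c ⊆ S := by simp [goodK]

def slice (n D : ℕ) (T : Finset (Fin (D + 1) → Clause n 1)) (u0 : Clause n 1) :
    Finset (Fin D → Clause n 1) := Finset.univ.filter fun u' => Fin.cons u0 u' ∈ T

lemma mem_slice {D : ℕ} {T : Finset (Fin (D + 1) → Clause n 1)} {u0 : Clause n 1}
    {u' : Fin D → Clause n 1} : u' ∈ slice n D T u0 ↔ Fin.cons u0 u' ∈ T := by simp [slice]

def SS (n k D : ℕ) (T : Finset (Fin (D + 1) → Clause n 1)) (c' : Fin D → Clause n k) :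
    Finset (Clause n 1) :=
  Finset.univ.filter fun u0 => c' ∈ Bad n k D (slice n D T u0)

lemma mem_SS {D : ℕ} {T : Finset (Fin (D + 1) → Clause n 1)} {c' : Fin D → Clause n k}
    {u0 : Clause n 1} : u0 ∈ SS n k D T c' ↔ c' ∈ Bad n k D (slice n D T u0) := by simp [SS]

lemma identity1 (D : ℕ) (T : Finset (Fin (D + 1) → Clause n 1)) :
    (Bad n k (D + 1) T).card
      = ∑ c' : Fin D → Clause n k, (goodK (k := k) (SS n k D T c')).card := by
  rw [Finset.card_eq_sum_card_fiberwise
    (f := fun c : Fin (D+1) → Clause n k => Fin.tail c)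
    (t := Finset.univ) (fun c _ => Finset.mem_univ _)]
  apply Finset.sum_congr rfl
  intro c' _
  refine Finset.card_bij' (fun c _ => c 0) (fun c0 _ => Fin.cons c0 c')
    ?hi ?hj ?left ?right
  case hi =>
    intro c hc
    rw [Finset.mem_filter] at hc
    obtain ⟨hBad, htail⟩ := hc
    rw [mem_goodK]
    intro u0 hu0
    rw [mem_SS]
    refine mem_Bad.2 fun u' hu' => ?_
    rw [mem_slice]
    apply mem_Bad.1 hBad
    intro i
    induction i using Fin.cases with
    | zero => simpa using hu0
    | succ j =>
        have h2 : u' j ∈ subU (c' j) := hu' j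
        rw [← htail] at h2
        simpa [Fin.tail] using h2
  case hj =>
    intro c0 hc0
    rw [mem_goodK] at hc0
    rw [Finset.mem_filter]
    constructor
    · refine mem_Bad.2 fun u hu => ?_
      have h0 : u 0 ∈ subU c0 := by simpa using hu 0
      have hS := hc0 h0
      rw [mem_SS] at hS
      have hB := mem_Bad.1 hS (Fin.tail u) (fun j => by
        have h3 := hu j.succ
        simpa [Fin.tail] using h3)
      rw [mem_slice] at hB
      rwa [Fin.cons_self_tail] at hB
    · exact Fin.tail_cons _ _
  case left =>
    intro c hc
    rw [Finset.mem_filter] at hc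
    show Fin.cons (c 0) c' = c
    rw [← hc.2, Fin.cons_self_tail]
  case right =>
    intro c0 _
    simp

lemma identity2 (D : ℕ) (T : Finset (Fin (D + 1) → Clause n 1)) :
    (∑ c' : Fin D → Clause n k, (SS n k D T c').card)
      = ∑ u0 : Clause n 1, (Bad n k D (slice n D T u0)).card := by
  have h1 : ∀ c' : Fin D → Clause n k, (SS n k D T c').card
      = ∑ u0 : Clause n 1, if c' ∈ Bad n k D (slice n D T u0) then 1 else 0 := by
    intro c'
    rw [SS, Finset.card_filter]
  have h2 : ∀ u0 : Clause n 1, (Bad n k D (slice n D T u0)).card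
      = ∑ c' : Fin D → Clause n k, if c' ∈ Bad n k D (slice n D T u0) then 1 else 0 := by
    intro u0
    simp [Finset.sum_boole, Finset.filter_mem_eq_inter]
  rw [Finset.sum_congr rfl (fun c' _ => h1 c'), Finset.sum_comm]
  exact Finset.sum_congr rfl (fun u0 _ => (h2 u0).symm)

lemma identity3 (D : ℕ) (T : Finset (Fin (D + 1) → Clause n 1)) :
    (∑ u0 : Clause n 1, (slice n D T u0).card) = T.card := by
  rw [Finset.card_eq_sum_card_fiberwise
    (f := fun u : Fin (D+1) → Clause n 1 => u 0)
    (t := Finset.univ) (fun u _ => Finset.mem_univ _)]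
  apply Finset.sum_congr rfl
  intro u0 _
  symm
  refine Finset.card_bij' (fun u _ => Fin.tail u) (fun u' _ => Fin.cons u0 u')
    ?hi ?hj ?left ?right
  case hi =>
    intro u hu
    rw [Finset.mem_filter] at hu
    rw [mem_slice]
    show Fin.cons u0 (Fin.tail u) ∈ T
    rw [← hu.2, Fin.cons_self_tail]
    exact hu.1
  case hj =>
    intro u' hu'
    rw [mem_slice] at hu'
    rw [Finset.mem_filter]
    exact ⟨hu', by simp⟩
  case left =>
    intro u hu
    rw [Finset.mem_filter] at hu
    show Fin.cons u0 (Fin.tail u) = u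
    rw [← hu.2, Fin.cons_self_tail]
  case right =>
    intro u' _
    exact Fin.tail_cons _ _

lemma main_bound (hk1 : 1 ≤ k) (hkn : k ≤ n) :
    ∀ (D : ℕ) (T : Finset (Fin D → Clause n 1)),
      psi n k D ((T.card : ℝ) / (Fintype.card (Clause n 1) : ℝ) ^ D)
        ≤ ((Bad n k D T).card : ℝ) / (Fintype.card (Clause n k) : ℝ) ^ D := by
  have hn1 : 1 ≤ n := le_trans hk1 hkn
  have hU0 : 0 < Fintype.card (Clause n 1) := by rw [card_unit]; omega
  have hK0 : 0 < Fintype.card (Clause n k) := card_clause_pos' hkn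
  have hUU : (0:ℝ) < (Fintype.card (Clause n 1) : ℝ) := by exact_mod_cast hU0
  have hKK : (0:ℝ) < (Fintype.card (Clause n k) : ℝ) := by exact_mod_cast hK0
  intro D
  induction D with
  | zero =>
      intro T
      simp only [pow_zero, div_one]
      show (T.card : ℝ) ≤ ((Bad n k 0 T).card : ℝ)
      by_cases hT : ∀ u : Fin 0 → Clause n 1, u ∈ T
      · have hBad : Bad n k 0 T = Finset.univ :=
          Finset.eq_univ_iff_forall.2 (fun c => mem_Bad.2 fun u _ => hT u)
        have hT' : T = Finset.univ := Finset.eq_univ_iff_forall.2 hT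
        rw [hBad, hT', Finset.card_univ, Finset.card_univ]
        simp [Fintype.card_fun]
      · push_neg at hT
        obtain ⟨u0, hu0⟩ := hT
        have hT0 : T = ∅ := by
          apply Finset.eq_empty_iff_forall_notMem.2
          intro u hu
          have huu : u = u0 := funext fun i => i.elim0
          exact hu0 (huu ▸ hu)
        rw [hT0]
        simp
  | succ D ih =>
      intro T
      have hM1 : 0 < Fintype.card (Fin D → Clause n k) := by
        rw [Fintype.card_fun]
        exact pow_pos hK0 _
      have hMreal : (Fintype.card (Fin D → Clause n k) : ℝ)
          = (Fintype.card (Clause n k) : ℝ) ^ D := by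
        rw [Fintype.card_fun, Fintype.card_fin]
        push_cast
        ring
      have hUU2 : (Fintype.card (Clause n 1) : ℝ) = 2 * (n : ℝ) := by
        rw [card_unit]
        push_cast
        ring
      have h3cast : (∑ u0 : Clause n 1, ((slice n D T u0).card : ℝ)) = (T.card : ℝ) := by
        exact_mod_cast congrArg (Nat.cast (R := ℝ)) (identity3 D T)
      have piece_tau :
          (∑ u0 : Clause n 1, ((slice n D T u0).card : ℝ)
              / (Fintype.card (Clause n 1) : ℝ) ^ D) / (Fintype.card (Clause n 1) : ℝ)
            = (T.card : ℝ) / (Fintype.card (Clause n 1) : ℝ) ^ (D + 1) := by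
        rw [← Finset.sum_div, div_div, ← pow_succ, h3cast]
      have step_psi : psi n k D ((T.card : ℝ) / (Fintype.card (Clause n 1) : ℝ) ^ (D + 1))
          ≤ (∑ u0 : Clause n 1,
              psi n k D (((slice n D T u0).card : ℝ) / (Fintype.card (Clause n 1) : ℝ) ^ D))
            / (Fintype.card (Clause n 1) : ℝ) := by
        rw [← piece_tau]
        exact psi_jensen hk1 D hU0 _
      have step2 : (∑ u0 : Clause n 1, ((Bad n k D (slice n D T u0)).card : ℝ))
          = ∑ c' : Fin D → Clause n k, ((SS n k D T c').card : ℝ) := by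
        exact_mod_cast congrArg (Nat.cast (R := ℝ)) (identity2 (k := k) D T).symm
      have chain1 : psi n k D ((T.card : ℝ) / (Fintype.card (Clause n 1) : ℝ) ^ (D + 1))
          ≤ (∑ c' : Fin D → Clause n k, ((SS n k D T c').card : ℝ)
                / (Fintype.card (Clause n 1) : ℝ))
              / (Fintype.card (Clause n k) : ℝ) ^ D := by
        refine step_psi.trans ?_
        have hsum : (∑ u0 : Clause n 1,
            psi n k D (((slice n D T u0).card : ℝ) / (Fintype.card (Clause n 1) : ℝ) ^ D))
            ≤ ∑ u0 : Clause n 1, ((Bad n k D (slice n D T u0)).card : ℝ)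
                / (Fintype.card (Clause n k) : ℝ) ^ D :=
          Finset.sum_le_sum (fun u0 _ => ih (slice n D T u0))
        refine (div_le_div_of_nonneg_right hsum hUU.le).trans_eq ?_
        rw [← Finset.sum_div, ← Finset.sum_div, step2]
        rw [div_div, div_div, mul_comm]
      show beta n k (psi n k D ((T.card : ℝ) / (Fintype.card (Clause n 1) : ℝ) ^ (D + 1)))
          ≤ ((Bad n k (D + 1) T).card : ℝ) / (Fintype.card (Clause n k) : ℝ) ^ (D + 1)
      have jb := jensen_beta (n := n) hk1 hM1
        (x := fun c' : Fin D → Clause n k =>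
          ((SS n k D T c').card : ℝ) / (Fintype.card (Clause n 1) : ℝ))
      rw [hMreal] at jb
      calc beta n k (psi n k D ((T.card : ℝ) / (Fintype.card (Clause n 1) : ℝ) ^ (D + 1)))
          ≤ beta n k ((∑ c' : Fin D → Clause n k, ((SS n k D T c').card : ℝ)
              / (Fintype.card (Clause n 1) : ℝ)) / (Fintype.card (Clause n k) : ℝ) ^ D) :=
            beta_mono chain1
        _ ≤ (∑ c' : Fin D → Clause n k,
              beta n k (((SS n k D T c').card : ℝ) / (Fintype.card (Clause n 1) : ℝ)))
              / (Fintype.card (Clause n k) : ℝ) ^ D := jb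
        _ ≤ (∑ c' : Fin D → Clause n k,
              ((goodK (k := k) (SS n k D T c')).card : ℝ) / (Fintype.card (Clause n k) : ℝ))
              / (Fintype.card (Clause n k) : ℝ) ^ D := by
            refine div_le_div_of_nonneg_right ?_ (pow_pos hKK D).le
            apply Finset.sum_le_sum
            intro c' _
            rw [le_div_iff₀ hKK, hUU2]
            exact E1 hk1 hkn (SS n k D T c')
        _ = ((Bad n k (D + 1) T).card : ℝ) / (Fintype.card (Clause n k) : ℝ) ^ (D + 1) := by
            rw [← Finset.sum_div, div_div, pow_succ,
              mul_comm ((Fintype.card (Clause n k) : ℝ))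
                ((Fintype.card (Clause n k) : ℝ) ^ D)]
            congr 1
            exact_mod_cast congrArg (Nat.cast (R := ℝ)) (identity1 (k := k) D T).symm


def Sel {D : ℕ} (d : Fin D → Clause n k) : Finset (Fin D → Clause n 1) :=
  Fintype.piFinset fun i => subU (d i)

lemma mem_Sel {D : ℕ} {d : Fin D → Clause n k} {u : Fin D → Clause n 1} :
    u ∈ Sel d ↔ ∀ i, u i ∈ subU (d i) := Fintype.mem_piFinset

lemma card_Sel {D : ℕ} (d : Fin D → Clause n k) : (Sel d).card = k ^ D := by
  rw [Sel, Fintype.card_piFinset]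
  simp [card_subU]

lemma Zf_mono {m D : ℕ} (f : (Fin n → Bool) → Bool) (c : Fin m → Clause n k)
    (g : Fin D → Fin m) : Zf f c ≤ Zf f (fun i => c (g i)) := by
  apply Finset.card_le_card
  intro x hx
  rw [Finset.mem_filter] at hx ⊢
  exact ⟨hx.1, hx.2.1, fun a => hx.2.2 (g a)⟩

lemma Zf_le_sum_sel {D : ℕ} (f : (Fin n → Bool) → Bool) (d : Fin D → Clause n k) :
    Zf f d ≤ ∑ u ∈ Sel d, Zf f u := by
  have hsub : (Finset.univ.filter fun x : Fin n → Bool =>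
      f x = true ∧ ∀ a : Fin D, sat x (d a))
      ⊆ (Sel d).biUnion (fun u => Finset.univ.filter fun x : Fin n → Bool =>
          f x = true ∧ ∀ a : Fin D, sat x (u a)) := by
    intro x hx
    rw [Finset.mem_filter] at hx
    obtain ⟨-, hf, hsat⟩ := hx
    choose l hl hxl using fun i => hsat i
    refine Finset.mem_biUnion.2 ⟨fun i => mkUnit (l i), ?_, ?_⟩
    · exact mem_Sel.2 fun i => mkUnit_mem_subU (hl i)
    · rw [Finset.mem_filter]
      exact ⟨Finset.mem_univ _, hf, fun i => ⟨l i, by simp [mkUnit], hxl i⟩⟩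
  calc Zf f d ≤ ((Sel d).biUnion _).card := Finset.card_le_card hsub
    _ ≤ ∑ u ∈ Sel d, Zf f u := Finset.card_biUnion_le

lemma exists_sel_ge {D m : ℕ} (hk1 : 1 ≤ k) (f : (Fin n → Bool) → Bool) (y : ℝ)
    (c : Fin m → Clause n k) (g : Fin D → Fin m)
    (hc : (k : ℝ) ^ D * y ≤ (Zf f c : ℝ)) :
    ∃ u ∈ Sel (fun i => c (g i)), ¬ ((Zf f u : ℝ) < y) := by
  by_contra hcon
  push_neg at hcon
  have hne : (Sel (fun i => c (g i))).Nonempty := by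
    rw [← Finset.card_pos, card_Sel]
    positivity
  have hlt : (∑ u ∈ Sel (fun i => c (g i)), (Zf f u : ℝ))
      < ∑ _u ∈ Sel (fun i => c (g i)), y :=
    Finset.sum_lt_sum_of_nonempty hne (fun u hu => hcon u hu)
  rw [Finset.sum_const, card_Sel, nsmul_eq_mul] at hlt
  have h1 : (Zf f c : ℝ) ≤ (Zf f (fun i => c (g i)) : ℝ) := by
    exact_mod_cast Zf_mono f c g
  have h2 : (Zf f (fun i => c (g i)) : ℝ) ≤ ∑ u ∈ Sel (fun i => c (g i)), (Zf f u : ℝ) := by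
    have := Zf_le_sum_sel f (fun i => c (g i))
    push_cast
    exact_mod_cast this
  have h3 : ((k ^ D : ℕ) : ℝ) = (k : ℝ) ^ D := by push_cast; ring
  rw [h3] at hlt
  linarith


def grp {s D m : ℕ} (hm : s * D ≤ m) (j : Fin s) (i : Fin D) : Fin m :=
  ⟨j.1 * D + i.1, by
    have hi := i.2
    have hj := j.2
    calc j.1 * D + i.1 < j.1 * D + D := by omega
      _ = (j.1 + 1) * D := by ring
      _ ≤ s * D := Nat.mul_le_mul_right D hj
      _ ≤ m := hm⟩

lemma count_lemma (hk1 : 1 ≤ k) {D : ℕ} (hD : 1 ≤ D) (f : (Fin n → Bool) → Bool) (y : ℝ)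
    {m s : ℕ} (hm : s * D ≤ m) :
    ((Finset.univ.filter
        (fun c : Fin m → Clause n k => ¬ ((Zf f c : ℝ) < (k : ℝ) ^ D * y))).card)
      ≤ ((Finset.univ.filter
          (fun d : Fin D → Clause n k => ∃ u ∈ Sel d, ¬ ((Zf f u : ℝ) < y))).card) ^ s
        * (Fintype.card (Clause n k)) ^ (m - s * D) := by
  classical
  set Q := Finset.univ.filter
    (fun d : Fin D → Clause n k => ∃ u ∈ Sel d, ¬ ((Zf f u : ℝ) < y)) with hQ
  set tgt := (Fintype.piFinset (fun _ : Fin s => Q))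
    ×ˢ (Finset.univ : Finset (Fin (m - s * D) → Clause n k)) with htgt
  have hcard : tgt.card
      = Q.card ^ s * (Fintype.card (Clause n k)) ^ (m - s * D) := by
    rw [htgt, Finset.card_product, Fintype.card_piFinset]
    rw [Finset.prod_const, Finset.card_univ, Fintype.card_fin, Finset.card_univ,
      Fintype.card_fun, Fintype.card_fin]
  rw [← hcard]
  apply Finset.card_le_card_of_injOn
    (fun c => (fun j i => c (grp hm j i), fun r => c ⟨s * D + r.1, by
      have := r.2; omega⟩))
  · intro c hc
    rw [Finset.mem_coe, Finset.mem_filter] at hc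
    rw [Finset.mem_coe, htgt, Finset.mem_product]
    constructor
    · rw [Fintype.mem_piFinset]
      intro j
      rw [hQ, Finset.mem_filter]
      refine ⟨Finset.mem_univ _, ?_⟩
      exact exists_sel_ge hk1 f y c (grp hm j) (not_lt.1 hc.2)
    · exact Finset.mem_univ _
  · intro c _ c' _ h
    simp only [Prod.mk.injEq] at h
    funext i
    rcases lt_or_ge i.1 (s * D) with hi | hi
    · have hD0 : 0 < D := hD
      have hj : i.1 / D < s := (Nat.div_lt_iff_lt_mul hD0).2 (by
        calc i.1 < s * D := hi
          _ = s * D := rfl)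
      have hr : i.1 % D < D := Nat.mod_lt _ hD0
      have h1 := congrFun (congrFun h.1 ⟨i.1 / D, hj⟩) ⟨i.1 % D, hr⟩
      have hgrp : (grp hm ⟨i.1 / D, hj⟩ ⟨i.1 % D, hr⟩) = i := by
        apply Fin.ext
        show i.1 / D * D + i.1 % D = i.1
        rw [mul_comm]
        exact Nat.div_add_mod i.1 D
      rwa [hgrp] at h1
    · have hr : i.1 - s * D < m - s * D := by
        have := i.2
        omega
      have h1 := congrFun h.2 ⟨i.1 - s * D, hr⟩
      have heq : (⟨s * D + (i.1 - s * D), by have := i.2; omega⟩ : Fin m) = i :=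
        Fin.ext (by simp; omega)
      rwa [heq] at h1

lemma Q_compl (f : (Fin n → Bool) → Bool) (y : ℝ) {D : ℕ} :
    (Finset.univ.filter
        (fun d : Fin D → Clause n k => ∃ u ∈ Sel d, ¬ ((Zf f u : ℝ) < y)))
      = Finset.univ.filter (fun d : Fin D → Clause n k =>
          ¬ (∀ u : Fin D → Clause n 1, (∀ i, u i ∈ subU (d i))
              → u ∈ Finset.univ.filter (fun u : Fin D → Clause n 1 => (Zf f u : ℝ) < y))) := by
  apply Finset.filter_congr
  intro d _
  constructor
  · rintro ⟨u, hu, hnot⟩ hall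
    have := hall u (mem_Sel.1 hu)
    rw [Finset.mem_filter] at this
    exact hnot this.2
  · intro hnot
    push_neg at hnot
    obtain ⟨u, hu, hmem⟩ := hnot
    refine ⟨u, mem_Sel.2 hu, fun hlt => hmem ?_⟩
    rw [Finset.mem_filter]
    exact ⟨Finset.mem_univ _, hlt⟩

lemma Pf_eq (n j m : ℕ) (f : (Fin n → Bool) → Bool) (y : ℝ) :
    Pf n j m f y
      = (((Finset.univ.filter
          (fun c : Fin m → Clause n j => (Zf f c : ℝ) < y)).card : ℝ))
        / (Fintype.card (Clause n j) : ℝ) ^ m := by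
  rw [Pf]
  congr 1
  rw [Finset.sum_boole]


end AuxProof

set_option maxHeartbeats 1000000 in
open AuxProof in
/-- **Replacing `D` random unit clauses by many random `k`-clauses:**
for any unbounded increasing sequence `h(n)` and any `ε > 0`, for all `n` large enough and
any Boolean formula `f` on `n` variables,
`ℙ{Z(f ∧ C₁⁽¹⁾ ∧ … ∧ C_D⁽¹⁾) < y} ≤ ℙ{Z(f ∧ C₁⁽ᵏ⁾ ∧ … ∧ C_{h(n)}⁽ᵏ⁾) < k^D y} + ε`. -/
theorem unit_clauses_vs_k_clauses (k : ℕ) (hk : 2 ≤ k) (D : ℕ) (hD : 1 ≤ D) (y : ℝ)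
    (h : ℕ → ℕ) (hmono : Monotone h) (hub : Tendsto h atTop atTop)
    (ε : ℝ) (hε : 0 < ε) :
    ∀ᶠ (n : ℕ) in atTop, ∀ f : (Fin n → Bool) → Bool,
      Pf n 1 D f y ≤ Pf n k (h n) f ((k : ℝ) ^ D * y) + ε := by
  have hk1 : 1 ≤ k := by omega
  set ε' : ℝ := min ε (1 / 2) with hε'def
  have hε'pos : 0 < ε' := lt_min hε (by norm_num)
  have hε'le : ε' ≤ ε := min_le_left _ _
  have hε'1 : ε' ≤ 1 := le_trans (min_le_right _ _) (by norm_num)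
  set δ : ℝ := dseq k ε' D with hδdef
  have hδpos : 0 < δ := dseq_pos hk1 hε'pos D
  have hδ1 : δ ≤ 1 := dseq_le_one hk1 hε'pos hε'1 D
  obtain ⟨s, hs⟩ := exists_pow_lt_of_lt_one hε'pos (show (1 : ℝ) - δ < 1 by linarith)
  set n0 : ℕ := ⌈(2 * (k : ℝ)) / δ⌉₊ with hn0def
  filter_upwards [hub.eventually_ge_atTop (s * D),
    eventually_ge_atTop (max k (max 1 n0))] with n hhn hn f
  have hkn : k ≤ n := le_trans (le_max_left _ _) hn
  have hn1 : 1 ≤ n := le_trans (le_trans (le_max_left _ _) (le_max_right k _)) hn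
  have hn0n : n0 ≤ n := le_trans (le_trans (le_max_right _ _) (le_max_right k _)) hn
  have hnR : (0 : ℝ) < n := by exact_mod_cast hn1
  have hκ : (k : ℝ) / n ≤ δ / 2 := by
    have h1 : (2 * (k : ℝ)) / δ ≤ (n0 : ℝ) := Nat.le_ceil _
    have h2 : (n0 : ℝ) ≤ n := by exact_mod_cast hn0n
    have h3 : (2 * (k : ℝ)) / δ ≤ n := le_trans h1 h2
    rw [div_le_iff₀ hδpos] at h3
    rw [div_le_div_iff₀ hnR two_pos]
    nlinarith
  have hU0 : 0 < Fintype.card (Clause n 1) := by rw [card_unit]; omega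
  have hK0 : 0 < Fintype.card (Clause n k) := card_clause_pos' hkn
  have hUU : (0 : ℝ) < (Fintype.card (Clause n 1) : ℝ) := by exact_mod_cast hU0
  have hKK : (0 : ℝ) < (Fintype.card (Clause n k) : ℝ) := by exact_mod_cast hK0
  set T := Finset.univ.filter (fun u : Fin D → Clause n 1 => (Zf f u : ℝ) < y) with hT
  have hPf1 : Pf n 1 D f y = (T.card : ℝ) / (Fintype.card (Clause n 1) : ℝ) ^ D :=
    Pf_eq n 1 D f y
  have hPfk0 : 0 ≤ Pf n k (h n) f ((k : ℝ) ^ D * y) := by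
    rw [Pf_eq]
    positivity
  rcases le_or_gt ((T.card : ℝ) / (Fintype.card (Clause n 1) : ℝ) ^ D) ε' with hcase | hcase
  · rw [hPf1]
    linarith
  · -- dense case
    set QS := Finset.univ.filter (fun d : Fin D → Clause n k =>
      ∃ u ∈ Sel d, ¬ ((Zf f u : ℝ) < y)) with hQS
    set ES := Finset.univ.filter
      (fun c : Fin (h n) → Clause n k => ¬ ((Zf f c : ℝ) < (k : ℝ) ^ D * y)) with hES
    set KKr := (Fintype.card (Clause n k) : ℝ) with hKKr
    have hψ : δ ≤ psi n k D ((T.card : ℝ) / (Fintype.card (Clause n 1) : ℝ) ^ D) :=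
      (psi_ge_dseq hk1 hε'pos hε'1 D hκ).trans (psi_mono D hcase.le)
    have hBad : δ ≤ ((Bad n k D T).card : ℝ) / KKr ^ D :=
      hψ.trans (main_bound hk1 hkn D T)
    have hBad' : δ * KKr ^ D ≤ ((Bad n k D T).card : ℝ) :=
      (le_div_iff₀ (pow_pos hKK D)).1 hBad
    have hsplitQ : (Bad n k D T).card
        + (Finset.univ.filter (fun d : Fin D → Clause n k =>
            ¬ (∀ u : Fin D → Clause n 1, (∀ i, u i ∈ subU (d i)) → u ∈ T))).card
        = Fintype.card (Clause n k) ^ D := by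
      rw [show (Bad n k D T) = Finset.univ.filter (fun c : Fin D → Clause n k =>
          ∀ u : Fin D → Clause n 1, (∀ i, u i ∈ subU (c i)) → u ∈ T) from rfl]
      rw [Finset.card_filter_add_card_filter_not, Finset.card_univ,
        Fintype.card_fun, Fintype.card_fin]
    have hQeq : QS.card
        = (Finset.univ.filter (fun d : Fin D → Clause n k =>
            ¬ (∀ u : Fin D → Clause n 1, (∀ i, u i ∈ subU (d i)) → u ∈ T))).card := by
      rw [hQS, hT]
      exact congrArg Finset.card (Q_compl f y)
    have hQle : (QS.card : ℝ) ≤ (1 - δ) * KKr ^ D := by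
      rw [hQeq]
      have hcast : ((Bad n k D T).card : ℝ)
          + ((Finset.univ.filter (fun d : Fin D → Clause n k =>
              ¬ (∀ u : Fin D → Clause n 1, (∀ i, u i ∈ subU (d i)) → u ∈ T))).card : ℝ)
          = KKr ^ D := by
        rw [hKKr]
        exact_mod_cast congrArg (Nat.cast (R := ℝ)) hsplitQ
      linarith
    have hm : s * D ≤ h n := hhn
    have hE := count_lemma (n := n) hk1 hD f y hm
    have hEcast : ((ES.card : ℝ)) ≤ (QS.card : ℝ) ^ s * KKr ^ (h n - s * D) := by
      rw [hES, hQS, hKKr]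
      exact_mod_cast hE
    have hEratio : (ES.card : ℝ) / KKr ^ (h n) ≤ (1 - δ) ^ s := by
      have hmm : D * s + (h n - s * D) = h n := by
        rw [mul_comm]
        exact Nat.add_sub_cancel' hm
      have hKm : KKr ^ (h n) = (KKr ^ D) ^ s * KKr ^ (h n - s * D) := by
        rw [← pow_mul, ← pow_add, hmm]
      rw [div_le_iff₀ (pow_pos hKK (h n))]
      calc (ES.card : ℝ)
          ≤ (QS.card : ℝ) ^ s * KKr ^ (h n - s * D) := hEcast
        _ ≤ ((1 - δ) * KKr ^ D) ^ s * KKr ^ (h n - s * D) := by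
            refine mul_le_mul_of_nonneg_right ?_ (by positivity)
            exact pow_le_pow_left₀ (by positivity) hQle s
        _ = (1 - δ) ^ s * KKr ^ (h n) := by
            rw [mul_pow, hKm]
            ring
    have hsplitE : (Finset.univ.filter
          (fun c : Fin (h n) → Clause n k => (Zf f c : ℝ) < (k : ℝ) ^ D * y)).card
        + ES.card = Fintype.card (Clause n k) ^ (h n) := by
      rw [hES, Finset.card_filter_add_card_filter_not, Finset.card_univ,
        Fintype.card_fun, Fintype.card_fin]
    have hPfk : 1 - (1 - δ) ^ s ≤ Pf n k (h n) f ((k : ℝ) ^ D * y) := by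
      rw [Pf_eq]
      have hcast : ((Finset.univ.filter
            (fun c : Fin (h n) → Clause n k => (Zf f c : ℝ) < (k : ℝ) ^ D * y)).card : ℝ)
          + (ES.card : ℝ) = KKr ^ (h n) := by
        rw [hKKr]
        exact_mod_cast congrArg (Nat.cast (R := ℝ)) hsplitE
      rw [le_div_iff₀ (pow_pos hKK (h n))]
      have hE2 : (ES.card : ℝ) ≤ (1 - δ) ^ s * KKr ^ (h n) :=
        (div_le_iff₀ (pow_pos hKK (h n))).1 hEratio
      have hexpand : (1 - (1 - δ) ^ s) * KKr ^ (h n)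
          = KKr ^ (h n) - (1 - δ) ^ s * KKr ^ (h n) := by ring
      rw [hexpand]
      linarith
    have hPf1le : Pf n 1 D f y ≤ 1 := by
      rw [hPf1, div_le_one (pow_pos hUU D)]
      have hTle : T.card ≤ (Fintype.card (Clause n 1)) ^ D := by
        calc T.card ≤ (Finset.univ : Finset (Fin D → Clause n 1)).card :=
              Finset.card_le_card (Finset.filter_subset _ _)
          _ = (Fintype.card (Clause n 1)) ^ D := by
              rw [Finset.card_univ, Fintype.card_fun, Fintype.card_fin]
      exact_mod_cast hTle
    linarith
end
end
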